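/- arXiv:2504.17458 — 9 statements merged into one kernel-verified Lean document; each statement's English description precedes it below -/
import Mathlib

section
/- Let H be a monotone (subgraph-closed) class of host graphs and G a guest class. If there is a constant s with c_g(G,J) ≤ s for every graph J that lies both in the union-closure of G and in H, then c_g(G,H') ≤ s·c_u(G,H') for every H' ∈ H. In particular H is (c_g, c_u)-bounded. -/
open SimpleGraph

/-- A class of simple graphs on arbitrary (small) vertex types. -/
def GraphClass : Type 1 := ∀ (V : Type), SimpleGraph V → Prop

/-- The class contains the graph `K₂`. -/
def GraphClass.ContainsK2 (𝒢 : GraphClass) : Prop := 𝒢 (Fin 2) ⊤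

/-- Hereditary: closed under induced subgraphs. -/
def GraphClass.Hereditary (𝒢 : GraphClass) : Prop :=
  ∀ (V : Type) (G : SimpleGraph V), 𝒢 V G → ∀ s : Set V, 𝒢 s (G.induce s)

/-- Monotone: closed under (not necessarily spanning) subgraphs. -/
def GraphClass.MonotoneClass (𝒢 : GraphClass) : Prop :=
  ∀ (V : Type) (G : SimpleGraph V), 𝒢 V G →
    ∀ (s : Set V) (G' : SimpleGraph s), G' ≤ G.induce s → 𝒢 s G'

/-- Component-closed: every connected component of a member is a member. -/
def GraphClass.ComponentClosed (𝒢 : GraphClass) : Prop :=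
  ∀ (V : Type) (G : SimpleGraph V), 𝒢 V G →
    ∀ c : G.ConnectedComponent, 𝒢 c.supp (G.induce c.supp)

/-- The vertex-disjoint union of a family of graphs. -/
def disjUnionGraph {ι : Type} {W : ι → Type} (G : ∀ i, SimpleGraph (W i)) :
    SimpleGraph (Σ i, W i) :=
  SimpleGraph.fromRel (fun p q => ∃ h : p.1 = q.1, (G q.1).Adj (h ▸ p.2) q.2)

/-- Union-closed: closed under finite vertex-disjoint unions. -/
def GraphClass.UnionClosed (𝒢 : GraphClass) : Prop :=
  ∀ (ι : Type), Finite ι → ∀ (W : ι → Type) (G : ∀ i, SimpleGraph (W i)),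
    (∀ i, 𝒢 (W i) (G i)) → 𝒢 _ (disjUnionGraph G)

/-- The union-closure of a class: all graphs isomorphic to a finite
vertex-disjoint union of members of the class. -/
def GraphClass.unionClosure (𝒢 : GraphClass) : GraphClass :=
  fun V G => ∃ (ι : Type) (_ : Finite ι) (W : ι → Type) (Gs : ∀ i, SimpleGraph (W i)),
    (∀ i, 𝒢 (W i) (Gs i)) ∧ Nonempty (G ≃g disjUnionGraph Gs)

/-- A `𝒢`-cover of a host graph `H`: a finite family of finite guest graphs together
with homomorphisms to `H` such that every edge of `H` is hit. -/
structure GraphCover {V : Type} (H : SimpleGraph V) : Type 1 where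
  ι : Type
  finι : Finite ι
  W : ι → Type
  finW : ∀ i, Finite (W i)
  G : ∀ i, SimpleGraph (W i)
  φ : ∀ i, G i →g H
  edge_surj : ∀ ⦃u v : V⦄, H.Adj u v → ∃ i, ∃ a b, (G i).Adj a b ∧ φ i a = u ∧ φ i b = v

namespace GraphCover

variable {V : Type} {H : SimpleGraph V}

/-- All guests belong to the class `𝒢`. -/
def InClass (c : GraphCover H) (𝒢 : GraphClass) : Prop := ∀ i, 𝒢 (c.W i) (c.G i)

/-- The cover is injective on each guest. -/
def Injective (c : GraphCover H) : Prop := ∀ i, Function.Injective (c.φ i)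

/-- The total number of preimages of a vertex `v` of the host. -/
noncomputable def mult (c : GraphCover H) (v : V) : ℕ :=
  Nat.card {p : Σ i, c.W i // c.φ p.1 p.2 = v}

/-- `s`-local: every host vertex has at most `s` preimages. -/
def IsLocal (c : GraphCover H) (s : ℕ) : Prop := ∀ v, c.mult v ≤ s

/-- `t`-global: at most `t` guests are used. -/
def IsGlobal (c : GraphCover H) (t : ℕ) : Prop := Nat.card c.ι ≤ t

/-- The guests can be grouped into `t` groups of pairwise vertex-disjoint guests,
i.e. the cover uses at most `t` members of the union-closure of the class. -/
def IsUnion (c : GraphCover H) (t : ℕ) : Prop :=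
  ∃ f : c.ι → Fin t, ∀ i j, i ≠ j → f i = f j →
    Disjoint (Set.range (c.φ i)) (Set.range (c.φ j))

end GraphCover

/-- The global `𝒢`-covering number. -/
noncomputable def globalCN (𝒢 : GraphClass) {V : Type} (H : SimpleGraph V) : ℕ :=
  sInf {t | ∃ c : GraphCover H, c.InClass 𝒢 ∧ c.Injective ∧ c.IsGlobal t}

/-- The union `𝒢`-covering number. -/
noncomputable def unionCN (𝒢 : GraphClass) {V : Type} (H : SimpleGraph V) : ℕ :=
  sInf {t | ∃ c : GraphCover H, c.InClass 𝒢 ∧ c.Injective ∧ c.IsUnion t}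

/-- The local `𝒢`-covering number. -/
noncomputable def localCN (𝒢 : GraphClass) {V : Type} (H : SimpleGraph V) : ℕ :=
  sInf {s | ∃ c : GraphCover H, c.InClass 𝒢 ∧ c.Injective ∧ c.IsLocal s}

/-- The folded `𝒢`-covering number. -/
noncomputable def foldedCN (𝒢 : GraphClass) {V : Type} (H : SimpleGraph V) : ℕ :=
  sInf {s | ∃ c : GraphCover H, c.InClass 𝒢 ∧ c.IsLocal s}

/-- `H` has treewidth at most `w`, via tree-decompositions. -/
def TreewidthLE {V : Type} (H : SimpleGraph V) (w : ℕ) : Prop :=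
  ∃ (ι : Type) (T : SimpleGraph ι) (bag : ι → Set V),
    T.Connected ∧ T.IsAcyclic ∧
    (∀ v, ∃ i, v ∈ bag i) ∧
    (∀ ⦃u v⦄, H.Adj u v → ∃ i, u ∈ bag i ∧ v ∈ bag i) ∧
    (∀ v, (T.induce {i | v ∈ bag i}).Connected) ∧
    (∀ i, Nat.card (bag i) ≤ w + 1)

/-- `G` has maximum average degree at most `d`. -/
def madLE {V : Type} (G : SimpleGraph V) (d : ℚ) : Prop :=
  ∀ s : Set V, s.Nonempty → (2 * Nat.card (G.induce s).edgeSet : ℚ) ≤ d * Nat.card s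

/-- A star forest: an acyclic graph with no path on four vertices, i.e. every
connected component is a star. -/
def IsStarForest {V : Type} (F : SimpleGraph V) : Prop :=
  F.IsAcyclic ∧ ∀ a b c d, F.Adj a b → F.Adj b c → F.Adj c d → a = c ∨ b = d

/-- `F` is a weak induced subgraph of `H`: a subgraph each of whose connected
components is an induced subgraph of `H`. -/
def IsWeakInduced {V : Type} (F H : SimpleGraph V) : Prop :=
  F ≤ H ∧ ∀ u v, F.Reachable u v → H.Adj u v → F.Adj u v

/-- No induced cycle of length at least 4. -/
def IsChordal {V : Type} (G : SimpleGraph V) : Prop :=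
  ∀ (n : ℕ), 4 ≤ n → ∀ s : Set V, ¬ Nonempty ((G.induce s) ≃g SimpleGraph.cycleGraph n)

/-- The intersection graph of a family of sets. -/
def intersectionGraph {ι V : Type} (S : ι → Set V) : SimpleGraph ι :=
  SimpleGraph.fromRel (fun i j => (S i ∩ S j).Nonempty)

/-- The shift graph of a directed graph `D`: vertices are the directed edges,
and `uv` is adjacent to `xy` iff `v = x` (or symmetrically `y = u`). -/
def shiftGraph {V : Type} (D : V → V → Prop) : SimpleGraph {p : V × V // D p.1 p.2} :=
  SimpleGraph.fromRel (fun e f => e.val.2 = f.val.1)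

section AuxStatement2

variable {V : Type} {H : SimpleGraph V} (c : GraphCover H) {t : ℕ} (f : c.ι → Fin t)

/-- The guests in group `k`. -/
private def gIdx (k : Fin t) : Type := {i : c.ι // f i = k}

private def gW {k : Fin t} (i : gIdx c f k) : Type := c.W i.1

private def gG {k : Fin t} (i : gIdx c f k) : SimpleGraph (gW c f i) := c.G i.1

/-- The total embedding of group `k` into the host. -/
private def gΦ {k : Fin t} (p : Σ i : gIdx c f k, gW c f i) : V := c.φ p.1.1 p.2

private lemma gΦ_inj (hInj : c.Injective)
    (hdisj : ∀ i j, i ≠ j → f i = f j →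
      Disjoint (Set.range (c.φ i)) (Set.range (c.φ j)))
    (k : Fin t) : Function.Injective (gΦ c f (k := k)) := by
  rintro ⟨⟨i, hi⟩, a⟩ ⟨⟨j, hj⟩, b⟩ hab
  by_cases hij : i = j
  · subst hij
    have hab' : a = b := hInj i hab
    subst hab'
    rfl
  · have hd := hdisj i j hij (hi.trans hj.symm)
    exact absurd (show c.φ i a ∈ Set.range (c.φ j) from ⟨b, hab.symm⟩)
      (Set.disjoint_left.mp hd ⟨a, rfl⟩)

private lemma g_adj_host {k : Fin t} {p q : Σ i : gIdx c f k, gW c f i}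
    (h : (disjUnionGraph (gG c f (k := k))).Adj p q) :
    H.Adj (gΦ c f p) (gΦ c f q) := by
  have key : ∀ p q : Σ i : gIdx c f k, gW c f i,
      (∃ h : p.1 = q.1, (gG c f q.1).Adj (h ▸ p.2) q.2) → H.Adj (gΦ c f p) (gΦ c f q) := by
    rintro ⟨pi, a⟩ ⟨qi, b⟩ ⟨h1, h2⟩
    cases h1
    exact (c.φ pi.1).map_rel h2
  rw [disjUnionGraph, SimpleGraph.fromRel_adj] at h
  rcases h with ⟨-, h | h⟩
  exacts [key p q h, (key q p h).symm]

private noncomputable def gE {k : Fin t} (hg : Function.Injective (gΦ c f (k := k))) :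
    (Σ i : gIdx c f k, gW c f i) ≃ Set.range (gΦ c f (k := k)) :=
  Equiv.ofInjective _ hg

/-- The subgraph of the host spanned by group `k`, as a graph on the range of `gΦ`. -/
private noncomputable def gJ {k : Fin t} (hg : Function.Injective (gΦ c f (k := k))) :
    SimpleGraph (Set.range (gΦ c f (k := k))) :=
  (disjUnionGraph (gG c f (k := k))).map (gE c f hg).toEmbedding

private lemma gE_coe {k : Fin t} (hg : Function.Injective (gΦ c f (k := k)))
    (p : Σ i : gIdx c f k, gW c f i) : (gE c f hg p : V) = gΦ c f p := rfl

private lemma gJ_le {k : Fin t} (hg : Function.Injective (gΦ c f (k := k))) :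
    gJ c f hg ≤ H.induce (Set.range (gΦ c f (k := k))) := by
  intro x y hxy
  rw [gJ, SimpleGraph.map_adj] at hxy
  obtain ⟨p, q, hpq, hx, hy⟩ := hxy
  have hH := g_adj_host c f hpq
  show H.Adj x.1 y.1
  rw [← hx, ← hy]
  exact hH

private lemma gJ_iso {k : Fin t} (hg : Function.Injective (gΦ c f (k := k))) :
    Nonempty (gJ c f hg ≃g disjUnionGraph (gG c f (k := k))) :=
  ⟨(SimpleGraph.Iso.map (gE c f hg) _).symm⟩

/-- The tautological cover of `gJ` by the guests of group `k`. -/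
private noncomputable def gBase {k : Fin t} (hg : Function.Injective (gΦ c f (k := k))) :
    GraphCover (gJ c f hg) where
  ι := gIdx c f k
  finι := by have := c.finι; exact Subtype.finite
  W := gW c f
  finW := fun i => c.finW i.1
  G := gG c f
  φ := fun i => ⟨fun w => gE c f hg ⟨i, w⟩, by
    intro a b hab
    rw [gJ, SimpleGraph.map_adj]
    refine ⟨⟨i, a⟩, ⟨i, b⟩, ?_, rfl, rfl⟩
    rw [disjUnionGraph, SimpleGraph.fromRel_adj]
    exact ⟨fun h => hab.ne (sigma_mk_injective h), Or.inl ⟨rfl, hab⟩⟩⟩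
  edge_surj := by
    intro x y hxy
    rw [gJ, SimpleGraph.map_adj] at hxy
    obtain ⟨p, q, hpq, hx, hy⟩ := hxy
    rw [disjUnionGraph, SimpleGraph.fromRel_adj] at hpq
    obtain ⟨pi, a⟩ := p
    obtain ⟨qi, b⟩ := q
    rcases hpq with ⟨hne, ⟨h1, h2⟩ | ⟨h1, h2⟩⟩
    · cases h1
      exact ⟨pi, a, b, h2, hx, hy⟩
    · cases h1
      exact ⟨pi, a, b, h2.symm, hx, hy⟩

private lemma gBase_inClass (𝒢 : GraphClass) (hIn : c.InClass 𝒢) {k : Fin t}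
    (hg : Function.Injective (gΦ c f (k := k))) : (gBase c f hg).InClass 𝒢 :=
  fun i => hIn i.1

private lemma gBase_injective {k : Fin t} (hg : Function.Injective (gΦ c f (k := k))) :
    (gBase c f hg).Injective := by
  intro i w w' h
  have := (gE c f hg).injective h
  exact sigma_mk_injective this

end AuxStatement2

/-- if `ℋ` is monotone and `c_g(𝒢, J) ≤ s` for every `J` in the
union-closure of `𝒢` that lies in `ℋ`, then `c_g(𝒢,H) ≤ s · c_u(𝒢,H)` for
every `H ∈ ℋ`; in particular `ℋ` is `(c_g, c_u)`-bounded. -/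
theorem global_le_mul_union_of_monotone (𝒢 ℋ : GraphClass) (hmon : ℋ.MonotoneClass)
    (s : ℕ)
    (hs : ∀ (V : Type) [Fintype V] (J : SimpleGraph V),
      𝒢.unionClosure V J → ℋ V J → globalCN 𝒢 J ≤ s) :
    ∀ (V : Type) [Fintype V] (H : SimpleGraph V), ℋ V H →
      globalCN 𝒢 H ≤ s * unionCN 𝒢 H := by
  intro V _ H hH
  classical
  by_cases hg : {t | ∃ c : GraphCover H, c.InClass 𝒢 ∧ c.Injective ∧ c.IsGlobal t}.Nonempty
  swap
  · have h0 : globalCN 𝒢 H = 0 := by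
      rw [globalCN, Set.not_nonempty_iff_eq_empty.mp hg, Nat.sInf_empty]
    rw [h0]; exact Nat.zero_le _
  have hune : {t | ∃ c : GraphCover H, c.InClass 𝒢 ∧ c.Injective ∧ c.IsUnion t}.Nonempty := by
    obtain ⟨t, c, hIn, hInj, -⟩ := hg
    haveI := c.finι
    exact ⟨Nat.card c.ι, c, hIn, hInj, Finite.equivFin c.ι, fun i j hij hfij =>
      absurd ((Finite.equivFin c.ι).injective hfij) hij⟩
  have hmem : ∃ c : GraphCover H, c.InClass 𝒢 ∧ c.Injective ∧ c.IsUnion (unionCN 𝒢 H) :=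
    Nat.sInf_mem hune
  obtain ⟨c, hIn, hInj, f, hdisj⟩ := hmem
  haveI := c.finι
  have hg' : ∀ k, Function.Injective (gΦ c f (k := k)) := gΦ_inj c f hInj hdisj
  have hcov : ∀ k, ∃ d : GraphCover (gJ c f (hg' k)),
      d.InClass 𝒢 ∧ d.Injective ∧ Nat.card d.ι ≤ s := by
    intro k
    haveI : Fintype (Set.range (gΦ c f (k := k))) := Fintype.ofFinite _
    have hle : globalCN 𝒢 (gJ c f (hg' k)) ≤ s := by
      refine hs _ (gJ c f (hg' k)) ?_ ?_
      · exact ⟨gIdx c f k, (by have := c.finι; exact Subtype.finite), gW c f, gG c f,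
          fun i => hIn i.1, gJ_iso c f (hg' k)⟩
      · exact hmon V H hH _ _ (gJ_le c f (hg' k))
    have hne : {t' | ∃ d : GraphCover (gJ c f (hg' k)),
        d.InClass 𝒢 ∧ d.Injective ∧ d.IsGlobal t'}.Nonempty :=
      ⟨Nat.card (gBase c f (hg' k)).ι, gBase c f (hg' k), gBase_inClass c f 𝒢 hIn (hg' k),
        gBase_injective c f (hg' k), le_rfl⟩
    obtain ⟨d, h1, h2, h3⟩ := Nat.sInf_mem hne
    exact ⟨d, h1, h2, le_trans h3 hle⟩
  choose d hd1 hd2 hd3 using hcov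
  haveI : ∀ k, Finite ((d k).ι) := fun k => (d k).finι
  refine Nat.sInf_le ⟨⟨Σ k, (d k).ι, inferInstance, fun p => (d p.1).W p.2,
    fun p => (d p.1).finW p.2, fun p => (d p.1).G p.2,
    fun p => (⟨Subtype.val, fun h => gJ_le c f (hg' p.1) h⟩ :
      gJ c f (hg' p.1) →g H).comp ((d p.1).φ p.2), ?_⟩, ?_, ?_, ?_⟩
  · intro u v huv
    obtain ⟨i, a, b, hab, ha, hb⟩ := c.edge_surj huv
    have hJadj : (gJ c f (hg' (f i))).Adj (gE c f (hg' (f i)) ⟨⟨i, rfl⟩, a⟩)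
        (gE c f (hg' (f i)) ⟨⟨i, rfl⟩, b⟩) := by
      rw [gJ, SimpleGraph.map_adj]
      refine ⟨_, _, ?_, rfl, rfl⟩
      rw [disjUnionGraph, SimpleGraph.fromRel_adj]
      refine ⟨?_, Or.inl ⟨rfl, hab⟩⟩
      intro h
      injection h with h1 h2
      exact hab.ne h2
    obtain ⟨j, x, y, hxy, hx, hy⟩ := (d (f i)).edge_surj hJadj
    refine ⟨⟨f i, j⟩, x, y, hxy, ?_, ?_⟩
    · show ((d (f i)).φ j x : V) = u
      rw [hx, gE_coe]
      exact ha
    · show ((d (f i)).φ j y : V) = v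
      rw [hy, gE_coe]
      exact hb
  · exact fun p => hd1 p.1 p.2
  · intro p w w' h
    exact hd2 p.1 p.2 (Subtype.val_injective h)
  · show Nat.card (Σ k, (d k).ι) ≤ s * unionCN 𝒢 H
    haveI : ∀ k, Fintype ((d k).ι) := fun k => Fintype.ofFinite _
    rw [Nat.card_eq_fintype_card, Fintype.card_sigma]
    calc ∑ k, Fintype.card ((d k).ι) ≤ ∑ _k : Fin (unionCN 𝒢 H), s :=
          Finset.sum_le_sum fun k _ => by rw [← Nat.card_eq_fintype_card]; exact hd3 k
      _ = unionCN 𝒢 H * s := by simp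
      _ = s * unionCN 𝒢 H := Nat.mul_comm _ _
end

section
/- Let G be a component-closed guest class and H a graph of treewidth at most w. Then the union G-covering number of H is at most (w+1) times the local G-covering number of H: c_u(G,H) ≤ (w+1)·c_l(G,H). -/
open SimpleGraph

lemma aux_walk_in_set {V : Type} (G : SimpleGraph V) (S : Set V)
    (h : (G.induce S).Connected) {a b : V} (ha : a ∈ S) (hb : b ∈ S) :
    ∃ w : G.Walk a b, ∀ z ∈ w.support, z ∈ S := by
  obtain ⟨p⟩ := h.preconnected ⟨a, ha⟩ ⟨b, hb⟩
  let f : G.induce S →g G := ⟨Subtype.val, fun {x y} h => h⟩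
  refine ⟨p.map f, ?_⟩
  intro z hz
  rw [SimpleGraph.Walk.support_map] at hz
  obtain ⟨t, _, rfl⟩ := List.mem_map.mp hz
  exact t.2

lemma aux_path_length_eq_dist {V : Type} {T : SimpleGraph V} (hc : T.Connected)
    (ha : T.IsAcyclic) {x y : V} (p : T.Walk x y) (hp : p.IsPath) :
    p.length = T.dist x y := by
  classical
  obtain ⟨w, hw⟩ := (hc x y).exists_walk_length_eq_dist
  have he : (⟨p, hp⟩ : T.Path x y) = w.toPath := ha.path_unique _ _
  have hlen : p.length = (w.toPath : T.Walk x y).length := by rw [← he]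
  refine le_antisymm ?_ (SimpleGraph.dist_le p)
  rw [hlen, ← hw]
  exact SimpleGraph.Walk.length_bypass_le w

lemma aux_dist_split {V : Type} {T : SimpleGraph V} (hc : T.Connected)
    (ha : T.IsAcyclic) {x y m : V} (p : T.Walk x y) (hp : p.IsPath)
    (hm : m ∈ p.support) : T.dist x m + T.dist m y = T.dist x y := by
  classical
  have h1 := aux_path_length_eq_dist hc ha _ (hp.takeUntil hm)
  have h2 := aux_path_length_eq_dist hc ha _ (hp.dropUntil hm)
  have h3 := aux_path_length_eq_dist hc ha p hp
  rw [← h1, ← h2, ← h3, ← SimpleGraph.Walk.length_append, p.take_spec hm]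

lemma aux_append_isPath {V : Type} {T : SimpleGraph V} {x m y : V}
    {p : T.Walk x m} {q : T.Walk m y} (hp : p.IsPath) (hq : q.IsPath)
    (hd : ∀ z, z ∈ p.support → z ∈ q.support → z = m) :
    (p.append q).IsPath := by
  rw [SimpleGraph.Walk.isPath_def, SimpleGraph.Walk.support_append]
  refine List.Nodup.append hp.support_nodup ?_ ?_
  · have := hq.support_nodup
    rw [q.support_eq_cons, List.nodup_cons] at this
    exact this.2
  · intro z hz hz'
    have hm : z = m := hd z hz (List.mem_of_mem_tail hz')
    subst hm
    have := hq.support_nodup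
    rw [q.support_eq_cons] at this
    exact (List.nodup_cons.mp this).1 hz'

lemma aux_gate {V : Type} {T : SimpleGraph V} (hc : T.Connected) (ha : T.IsAcyclic)
    (t₀ : V) {A B : Set V}
    (hA : ∀ a ∈ A, ∀ b ∈ A, ∃ w : T.Walk a b, ∀ z ∈ w.support, z ∈ A)
    (hB : ∀ a ∈ B, ∀ b ∈ B, ∃ w : T.Walk a b, ∀ z ∈ w.support, z ∈ B)
    {x rA rB : V} (hxA : x ∈ A) (hxB : x ∈ B) (hrA : rA ∈ A) (hrB : rB ∈ B)
    (hminA : ∀ z ∈ A, T.dist t₀ rA ≤ T.dist t₀ z)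
    (hminB : ∀ z ∈ B, T.dist t₀ rB ≤ T.dist t₀ z)
    (hle : T.dist t₀ rB ≤ T.dist t₀ rA) : rA ∈ B := by
  classical
  -- path from x to rA inside A
  obtain ⟨wA, hwA⟩ := hA x hxA rA hrA
  set pA := wA.toPath with hpAdef
  have hpAsub : ∀ z ∈ (pA : T.Walk x rA).support, z ∈ A :=
    fun z hz => hwA z (wA.support_toPath_subset hz)
  obtain ⟨wB, hwB⟩ := hB x hxB rB hrB
  set pB := wB.toPath with hpBdef
  have hpBsub : ∀ z ∈ (pB : T.Walk x rB).support, z ∈ B :=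
    fun z hz => hwB z (wB.support_toPath_subset hz)
  -- paths to the root
  set qA := (hc rA t₀).some.toPath with hqAdef
  set qB := (hc rB t₀).some.toPath with hqBdef
  -- appended walks are paths
  have hperpA : ∀ z ∈ A, z ∈ (qA : T.Walk rA t₀).support → z = rA := by
    intro z hzA hzq
    have hsplit := aux_dist_split hc ha _ qA.2 hzq
    have h1 : T.dist t₀ rA ≤ T.dist t₀ z := hminA z hzA
    have e1 : T.dist t₀ z = T.dist z t₀ := SimpleGraph.dist_comm
    have e2 : T.dist t₀ rA = T.dist rA t₀ := SimpleGraph.dist_comm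
    have : T.dist rA z = 0 := by omega
    exact ((hc.dist_eq_zero_iff).mp this).symm
  have hPA : (( pA : T.Walk x rA).append (qA : T.Walk rA t₀)).IsPath :=
    aux_append_isPath pA.2 qA.2 (fun z hz hz' => hperpA z (hpAsub z hz) hz')
  have hperpB : ∀ z ∈ B, z ∈ (qB : T.Walk rB t₀).support → z = rB := by
    intro z hzB hzq
    have hsplit := aux_dist_split hc ha _ qB.2 hzq
    have h1 : T.dist t₀ rB ≤ T.dist t₀ z := hminB z hzB
    have e1 : T.dist t₀ z = T.dist z t₀ := SimpleGraph.dist_comm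
    have e2 : T.dist t₀ rB = T.dist rB t₀ := SimpleGraph.dist_comm
    have : T.dist rB z = 0 := by omega
    exact ((hc.dist_eq_zero_iff).mp this).symm
  have hPB : ((pB : T.Walk x rB).append (qB : T.Walk rB t₀)).IsPath :=
    aux_append_isPath pB.2 qB.2 (fun z hz hz' => hperpB z (hpBsub z hz) hz')
  -- uniqueness of path from x to t₀
  have huniq : (⟨_, hPA⟩ : T.Path x t₀) = ⟨_, hPB⟩ := ha.path_unique _ _
  have hPeq : ((pA : T.Walk x rA).append (qA : T.Walk rA t₀))
      = ((pB : T.Walk x rB).append (qB : T.Walk rB t₀)) := congrArg Subtype.val huniq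
  set P : T.Walk x t₀ := (pA : T.Walk x rA).append (qA : T.Walk rA t₀) with hPdef
  have hrAP : rA ∈ P.support := by
    rw [SimpleGraph.Walk.mem_support_append_iff]
    left
    exact SimpleGraph.Walk.end_mem_support _
  have hrBP : rB ∈ P.support := by
    rw [hPeq, SimpleGraph.Walk.mem_support_append_iff]
    left
    exact SimpleGraph.Walk.end_mem_support _
  -- split P at rB
  have hsplitP := P.take_spec hrBP
  have hcases : rA ∈ (P.takeUntil rB hrBP).support ∨ rA ∈ (P.dropUntil rB hrBP).support := by
    rw [← SimpleGraph.Walk.mem_support_append_iff, hsplitP]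
    exact hrAP
  rcases hcases with hcase | hcase
  · -- takeUntil is the unique path x → rB, which equals pB, inside B
    have htP : (P.takeUntil rB hrBP).IsPath := hPA.takeUntil hrBP
    have : (⟨_, htP⟩ : T.Path x rB) = pB := ha.path_unique _ _
    have hsup : (P.takeUntil rB hrBP) = (pB : T.Walk x rB) := congrArg Subtype.val this
    rw [hsup] at hcase
    exact hpBsub rA hcase
  · -- rA on the path from rB to t₀: forces rA = rB
    have hdP : (P.dropUntil rB hrBP).IsPath := hPA.dropUntil hrBP
    have hsplit := aux_dist_split hc ha _ hdP hcase
    have e1 : T.dist t₀ rB = T.dist rB t₀ := SimpleGraph.dist_comm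
    have e2 : T.dist t₀ rA = T.dist rA t₀ := SimpleGraph.dist_comm
    have : T.dist rB rA = 0 := by omega
    have := (hc.dist_eq_zero_iff).mp this
    rwa [← this]

/-- for a component-closed guest class and a host of treewidth at
most `w`, we have `c_u ≤ (w+1) · c_l`. -/
theorem union_le_treewidth_mul_local (𝒢 : GraphClass) (h2 : 𝒢.ContainsK2)
    (hcc : 𝒢.ComponentClosed) {V : Type} [Fintype V] (H : SimpleGraph V)
    (w : ℕ) (htw : TreewidthLE H w) :
    unionCN 𝒢 H ≤ (w + 1) * localCN 𝒢 H := by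
  classical
  by_cases hE : ∃ u v, H.Adj u v
  · -- main case: H has an edge
    obtain ⟨ι_T, T, bag, hTconn, hTacyc, hbag_v, hbag_e, hbag_conn, hbag_card⟩ := htw
    -- the set defining localCN is nonempty, hence localCN is attained
    have hne : {s | ∃ c : GraphCover H, c.InClass 𝒢 ∧ c.Injective ∧ c.IsLocal s}.Nonempty := by
      refine ⟨Nat.card (Σ _ : {p : V × V // H.Adj p.1 p.2}, Fin 2),
        ⟨⟨{p : V × V // H.Adj p.1 p.2}, inferInstance, fun _ => Fin 2, fun _ => inferInstance,
        fun _ => ⊤, fun p => ⟨fun a => if a = 0 then p.1.1 else p.1.2, ?_⟩, ?_⟩, ?_, ?_, ?_⟩⟩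
      · intro a b hab
        rw [SimpleGraph.top_adj] at hab
        fin_cases a <;> fin_cases b <;> simp only [Fin.isValue, reduceIte] <;>
          first | exact absurd rfl hab | exact p.2 | exact p.2.symm
      · intro u v h
        exact ⟨⟨(u, v), h⟩, 0, 1, by simp, rfl, rfl⟩
      · exact fun _ => h2
      · intro p a b hab
        have hne12 : p.val.1 ≠ p.val.2 := p.2.ne
        fin_cases a <;> fin_cases b <;> simp only [Fin.isValue, reduceIte] at hab <;>
          first | rfl | exact absurd hab hne12 | exact absurd hab.symm hne12
      · intro v
        exact Nat.card_le_card_of_injective (fun q => q.val)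
          (fun a b hab => Subtype.ext hab)
    have hs := Nat.sInf_mem hne
    obtain ⟨c, hclass, hinj, hloc⟩ := hs
    set s := localCN 𝒢 H with hsdef
    haveI := c.finι
    haveI := c.finW
    -- s ≥ 1 since H has an edge
    have hs1 : 1 ≤ s := by
      obtain ⟨u, v, huv⟩ := hE
      obtain ⟨i, a, b, hab, hu, hv⟩ := c.edge_surj huv
      haveI : Nonempty {p : Σ i, c.W i // c.φ p.1 p.2 = u} := ⟨⟨⟨i, a⟩, hu⟩⟩
      have : 0 < c.mult u := Nat.card_pos (α := {p : Σ i, c.W i // c.φ p.1 p.2 = u})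
      exact le_trans this (hloc u)
    -- split the guests into connected components
    haveI : ∀ i : c.ι, Finite ((c.G i).ConnectedComponent) := fun i => Quot.finite _
    let J := Σ i : c.ι, (c.G i).ConnectedComponent
    haveI : Finite J := inferInstance
    let c' : GraphCover H :=
      { ι := J
        finι := inferInstance
        W := fun j => (j.2.supp : Set (c.W j.1))
        finW := fun j => inferInstance
        G := fun j => (c.G j.1).induce j.2.supp
        φ := fun j => ⟨fun x => c.φ j.1 x.val, fun {a b} hab => (c.φ j.1).map_adj hab⟩
        edge_surj := by
          intro u v h
          obtain ⟨i, a, b, hab, hu, hv⟩ := c.edge_surj h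
          have hb : b ∈ ((c.G i).connectedComponentMk a).supp :=
            (SimpleGraph.ConnectedComponent.connectedComponentMk_eq_of_adj hab.symm)
          refine ⟨⟨i, (c.G i).connectedComponentMk a⟩, ⟨a, rfl⟩, ⟨b, hb⟩, hab, hu, hv⟩ }
    have hinj' : c'.Injective := by
      intro j x y hxy
      exact Subtype.ext (hinj j.1 hxy)
    have hclass' : c'.InClass 𝒢 := fun j => hcc _ _ (hclass j.1) j.2
    have hloc' : ∀ v, c'.mult v ≤ s := by
      intro v
      refine le_trans (Nat.card_le_card_of_injective
        (f := fun (q : {p : Σ j, c'.W j // c'.φ p.1 p.2 = v}) =>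
          (⟨⟨q.val.1.1, q.val.2.val⟩, q.prop⟩ : {p : Σ i, c.W i // c.φ p.1 p.2 = v}))
        ?_) (hloc v)
      rintro ⟨⟨⟨i, comp⟩, x⟩, hx⟩ ⟨⟨⟨i', comp'⟩, x'⟩, hx'⟩ h
      have h1 : (⟨i, x.val⟩ : Σ i, c.W i) = ⟨i', x'.val⟩ := congrArg Subtype.val h
      injection h1 with hii hxx'
      subst hii
      have hxx : x.val = x'.val := eq_of_heq hxx' 
      have hc1 : (c.G i).connectedComponentMk x.val = comp := x.2
      have hc2 : (c.G i).connectedComponentMk x'.val = comp' := x'.2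
      have hcomp : comp = comp' := by rw [← hc1, ← hc2, hxx]
      subst hcomp
      have hxe : x = x' := Subtype.ext hxx
      subst hxe
      rfl
    -- ranges of the guests
    set R : J → Set V := fun j => Set.range (c'.φ j) with hRdef
    have hRne : ∀ j : J, (R j).Nonempty := by
      intro j
      obtain ⟨x, hx⟩ := j.2.exists_rep
      exact ⟨c.φ j.1 x, ⟨x, hx⟩, rfl⟩
    -- ranges are connected in H (walk-connected)
    have hRwalk : ∀ j : J, ∀ u ∈ R j, ∀ v ∈ R j,
        ∃ wk : H.Walk u v, ∀ z ∈ wk.support, z ∈ R j := by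
      intro j u hu v hv
      obtain ⟨x, hx⟩ := hu
      obtain ⟨y, hy⟩ := hv
      have hx2 : (c.G j.1).connectedComponentMk x.val = j.2 := x.2
      have hy2 : (c.G j.1).connectedComponentMk y.val = j.2 := y.2
      have hreach : (c.G j.1).Reachable x.val y.val :=
        SimpleGraph.ConnectedComponent.exact (hx2.trans hy2.symm)
      obtain ⟨w0⟩ := hreach
      subst hx
      subst hy
      refine ⟨w0.map (c.φ j.1), ?_⟩
      intro z hz
      rw [SimpleGraph.Walk.support_map] at hz
      obtain ⟨z0, hz0, rfl⟩ := List.mem_map.mp hz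
      have hz0supp : (c.G j.1).connectedComponentMk z0 = j.2 := by
        have hr0 : (c.G j.1).Reachable x.val z0 := ⟨w0.takeUntil z0 hz0⟩
        rw [← SimpleGraph.ConnectedComponent.sound hr0]
        exact hx2
      exact ⟨⟨z0, hz0supp⟩, rfl⟩
    -- subtrees of the decomposition associated to the guests
    set S : J → Set ι_T := fun j => {t | ∃ v ∈ bag t, v ∈ R j} with hSdef
    have hbagwalk : ∀ (v : V) (a b : ι_T), v ∈ bag a → v ∈ bag b →
        ∃ p : T.Walk a b, ∀ t ∈ p.support, v ∈ bag t :=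
      fun v a b ha hb => aux_walk_in_set T {i | v ∈ bag i} (hbag_conn v) ha hb
    have hSwalk : ∀ j : J, ∀ a ∈ S j, ∀ b ∈ S j,
        ∃ p : T.Walk a b, ∀ t ∈ p.support, t ∈ S j := by
      intro j a ha b hb
      obtain ⟨va, hva, hvaR⟩ := ha
      obtain ⟨vb, hvb, hvbR⟩ := hb
      obtain ⟨wH, hwH⟩ := hRwalk j va hvaR vb hvbR
      have key : ∀ (u u' : V) (wk : H.Walk u u'), (∀ z ∈ wk.support, z ∈ R j) →
          ∀ a b, u ∈ bag a → u' ∈ bag b →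
          ∃ p : T.Walk a b, ∀ t ∈ p.support, t ∈ S j := by
        intro u u' wk
        induction wk with
        | nil =>
          intro hsup a b hua hub
          obtain ⟨p, hp⟩ := hbagwalk _ a b hua hub
          exact ⟨p, fun t ht =>
            ⟨_, hp t ht, hsup _ (SimpleGraph.Walk.start_mem_support _)⟩⟩
        | cons hadj wtl ih =>
          intro hsup a b hua hub
          obtain ⟨t2, ht1, ht2⟩ := hbag_e hadj
          obtain ⟨p1, hp1⟩ := hbagwalk _ a t2 hua ht1
          obtain ⟨p2, hp2⟩ := ih (fun z hz => hsup z
            (by rw [SimpleGraph.Walk.support_cons]; exact List.mem_cons_of_mem _ hz))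
            t2 b ht2 hub
          refine ⟨p1.append p2, ?_⟩
          intro t ht
          rcases (SimpleGraph.Walk.mem_support_append_iff _ _).mp ht with h | h
          · exact ⟨_, hp1 t h, hsup _ (SimpleGraph.Walk.start_mem_support _)⟩
          · exact hp2 t h
      exact key va vb wH hwH a b hva hvb
    -- a root of the decomposition tree
    obtain ⟨u0, v0, huv0⟩ := hE
    obtain ⟨t₀, ht₀⟩ := hbag_v u0
    -- top nodes of the subtrees
    have hrex : ∀ j : J, ∃ rj, rj ∈ S j ∧ ∀ z ∈ S j, T.dist t₀ rj ≤ T.dist t₀ z := by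
      intro j
      obtain ⟨v, hv⟩ := hRne j
      obtain ⟨t, htb⟩ := hbag_v v
      have hne' : {n | ∃ t' ∈ S j, T.dist t₀ t' = n}.Nonempty := ⟨_, t, ⟨v, htb, hv⟩, rfl⟩
      obtain ⟨t', ht'S, ht'd⟩ := Nat.sInf_mem hne'
      exact ⟨t', ht'S, fun z hz => ht'd ▸ Nat.sInf_le ⟨z, hz, rfl⟩⟩
    choose r hrS hrmin using hrex
    -- the key lemma: deeper top node lies in the other subtree
    have hkey : ∀ j k : J, (R j ∩ R k).Nonempty →
        T.dist t₀ (r k) ≤ T.dist t₀ (r j) → r j ∈ S k := by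
      rintro j k ⟨v, hvj, hvk⟩ hle
      obtain ⟨t, htb⟩ := hbag_v v
      exact aux_gate hTconn hTacyc t₀ (hSwalk j) (hSwalk k)
        ⟨v, htb, hvj⟩ ⟨v, htb, hvk⟩ (hrS j) (hrS k) (hrmin j) (hrmin k) hle
    -- counting: few guests meet a single bag
    haveI : ∀ (j : J), Finite (c'.W j) := c'.finW
    have hcount : ∀ (t : ι_T) (B : Finset J), (∀ k ∈ B, t ∈ S k) →
        B.card ≤ (w + 1) * s := by
      intro t B hB
      have hwit : ∀ k : {k // k ∈ B}, ∃ (v : V) (x : c'.W k.val),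
          v ∈ bag t ∧ c'.φ k.val x = v := by
        intro k
        obtain ⟨v, hvb, x, hx⟩ := hB k.val k.2
        exact ⟨v, x, hvb, hx⟩
      choose vf xf hvf hxf using hwit
      haveI : Fintype ↥(bag t) := Fintype.ofFinite _
      haveI : ∀ v : ↥(bag t), Fintype {p : Σ j', c'.W j' // c'.φ p.1 p.2 = v.val} :=
        fun v => Fintype.ofFinite _
      have hinj2 : Function.Injective (fun k : {k // k ∈ B} =>
          (⟨⟨vf k, hvf k⟩, ⟨⟨k.val, xf k⟩, hxf k⟩⟩ :
            Σ v : ↥(bag t), {p : Σ j', c'.W j' // c'.φ p.1 p.2 = v.val})) := by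
        intro k k' h
        have hkk := congrArg (fun z => z.snd.val.fst) h
        exact Subtype.ext hkk
      have hcard1 : B.card = Fintype.card {k // k ∈ B} := (Fintype.card_coe B).symm
      have hle1 : Fintype.card {k // k ∈ B} ≤
          Fintype.card (Σ v : ↥(bag t), {p : Σ j', c'.W j' // c'.φ p.1 p.2 = v.val}) :=
        Fintype.card_le_of_injective _ hinj2
      rw [Fintype.card_sigma] at hle1
      have hle2 : ∑ v : ↥(bag t), Fintype.card {p : Σ j', c'.W j' // c'.φ p.1 p.2 = v.val}
          ≤ Fintype.card ↥(bag t) * s := by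
        rw [← Finset.card_univ, ← smul_eq_mul]
        refine Finset.sum_le_card_nsmul _ _ _ ?_
        intro v _
        rw [← Nat.card_eq_fintype_card]
        exact hloc' v.val
      have hle3 : Fintype.card ↥(bag t) * s ≤ (w + 1) * s := by
        have hb := hbag_card t
        rw [Nat.card_eq_fintype_card] at hb
        exact Nat.mul_le_mul_right s hb
      omega
    -- greedy coloring
    haveI : Fintype J := Fintype.ofFinite J
    have hNpos : 0 < (w + 1) * s := Nat.mul_pos (Nat.succ_pos w) hs1
    have greedy : ∀ (n : ℕ) (A : Finset J), A.card = n → ∃ col : J → Fin ((w + 1) * s),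
        ∀ j ∈ A, ∀ k ∈ A, j ≠ k → col j = col k → ¬(R j ∩ R k).Nonempty := by
      intro n
      induction n with
      | zero =>
        intro A hA
        refine ⟨fun _ => ⟨0, hNpos⟩, ?_⟩
        intro j hj
        rw [Finset.card_eq_zero.mp hA] at hj
        exact absurd hj (Finset.notMem_empty j)
      | succ n ih =>
        intro A hA
        have hAne : A.Nonempty := Finset.card_pos.mp (by omega)
        obtain ⟨j, hjA, hjmax⟩ := A.exists_max_image (fun k => T.dist t₀ (r k)) hAne
        obtain ⟨col, hcol⟩ := ih (A.erase j)
          (by rw [Finset.card_erase_of_mem hjA, hA]; omega)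
        set B := (A.erase j).filter (fun k => (R j ∩ R k).Nonempty) with hBdef
        have hjB : j ∉ B := fun hjB =>
          (Finset.mem_erase.mp (Finset.mem_filter.mp hjB).1).1 rfl
        have hBcard : B.card + 1 ≤ (w + 1) * s := by
          have hins : (insert j B).card ≤ (w + 1) * s := by
            apply hcount (r j)
            intro k hk
            rcases Finset.mem_insert.mp hk with rfl | hkB
            · exact hrS k
            · obtain ⟨hkE, hkR⟩ := Finset.mem_filter.mp hkB
              have hkA : k ∈ A := Finset.mem_of_mem_erase hkE
              exact hkey j k hkR (hjmax k hkA)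
          rwa [Finset.card_insert_of_notMem hjB] at hins
        obtain ⟨color, hcolor⟩ : ∃ x : Fin ((w + 1) * s), x ∉ B.image col := by
          by_contra hcon
          push_neg at hcon
          have hsub : (Finset.univ : Finset (Fin ((w + 1) * s))) ⊆ B.image col :=
            fun x _ => hcon x
          have hNle : (w + 1) * s ≤ (B.image col).card := by
            simpa using Finset.card_le_card hsub
          have himle := Finset.card_image_le (s := B) (f := col)
          omega
        refine ⟨Function.update col j color, ?_⟩
        intro a ha b hb hab hceq hRab
        by_cases haj : a = j
        · subst haj
          have hbj : b ≠ a := fun h => hab h.symm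
          have hbB : b ∈ B := Finset.mem_filter.mpr
            ⟨Finset.mem_erase.mpr ⟨hbj, hb⟩, hRab⟩
          rw [Function.update_self, Function.update_of_ne hbj] at hceq
          exact hcolor (Finset.mem_image.mpr ⟨b, hbB, hceq.symm⟩)
        · by_cases hbj : b = j
          · subst hbj
            have haB : a ∈ B := Finset.mem_filter.mpr
              ⟨Finset.mem_erase.mpr ⟨haj, ha⟩, by
                obtain ⟨v, hv1, hv2⟩ := hRab
                exact ⟨v, hv2, hv1⟩⟩
            rw [Function.update_self, Function.update_of_ne haj] at hceq
            exact hcolor (Finset.mem_image.mpr ⟨a, haB, hceq⟩)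
          · rw [Function.update_of_ne haj, Function.update_of_ne hbj] at hceq
            exact hcol a (Finset.mem_erase.mpr ⟨haj, ha⟩)
              b (Finset.mem_erase.mpr ⟨hbj, hb⟩) hab hceq hRab
    obtain ⟨col, hcol⟩ := greedy (Finset.univ : Finset J).card Finset.univ rfl
    have hmem : (w + 1) * s ∈
        {t | ∃ cc : GraphCover H, cc.InClass 𝒢 ∧ cc.Injective ∧ cc.IsUnion t} := by
      refine ⟨c', hclass', hinj', ⟨col, ?_⟩⟩
      intro i j hne' hfe
      rw [Set.disjoint_iff_inter_eq_empty]
      by_contra hcon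
      exact hcol i (Finset.mem_univ i) j (Finset.mem_univ j) hne' hfe
        (Set.nonempty_iff_ne_empty.mpr hcon)
    exact Nat.sInf_le hmem
  · -- no edges: the empty cover shows unionCN = 0
    have h0 : (0 : ℕ) ∈ {t | ∃ c : GraphCover H, c.InClass 𝒢 ∧ c.Injective ∧ c.IsUnion t} := by
      refine ⟨⟨Empty, inferInstance, fun i => i.elim, fun i => i.elim, fun i => i.elim,
        fun i => i.elim, ?_⟩, fun i => i.elim, fun i => i.elim, fun i => i.elim, fun i => i.elim⟩
      intro u v h
      exact (hE ⟨u, v, h⟩).elim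
    exact le_trans (Nat.sInf_le h0) (Nat.zero_le _)
end

section
/- If G is a hereditary graph class containing K_2, then for every star K_{1,n}, the folded G-covering number equals the local G-covering number: c_f(G, K_{1,n}) = c_l(G, K_{1,n}). -/
open SimpleGraph

private lemma exists_inj_cover (𝒢 : GraphClass) (hher : 𝒢.Hereditary) {n s : ℕ}
    (c : GraphCover (completeBipartiteGraph (Fin 1) (Fin n)))
    (hc : c.InClass 𝒢) (hl : c.IsLocal s) :
    ∃ c' : GraphCover (completeBipartiteGraph (Fin 1) (Fin n)),
      c'.InClass 𝒢 ∧ c'.Injective ∧ c'.IsLocal s := by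
  classical
  haveI := c.finι
  haveI : ∀ i, Finite (c.W i) := c.finW
  let P : Type := {p : Σ i, c.W i // c.φ p.1 p.2 = Sum.inl 0}
  let covered : P → Fin n → Prop := fun p j =>
    ∃ b, (c.G p.1.1).Adj p.1.2 b ∧ c.φ p.1.1 b = Sum.inr j
  let S : ∀ p : P, Set (c.W p.1.1) := fun p =>
    {x | x = p.1.2 ∨ ∃ j, ∃ h : covered p j, x = h.choose}
  -- the new cover
  let c' : GraphCover (completeBipartiteGraph (Fin 1) (Fin n)) :=
    { ι := P
      finι := by
        have : Finite (Σ i, c.W i) := inferInstance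
        exact Subtype.finite
      W := fun p => S p
      finW := fun p => by
        have : Finite (c.W p.1.1) := c.finW _
        exact Subtype.finite
      G := fun p => (c.G p.1.1).induce (S p)
      φ := fun p => ⟨fun x => c.φ p.1.1 x.val, fun {a b} h => (c.φ p.1.1).map_adj h⟩
      edge_surj := by
        intro u v huv
        rcases u with a | j <;> rcases v with a' | j'
        · simp at huv
        · -- u = inl a, v = inr j'
          have ha : a = 0 := Subsingleton.elim a 0
          subst ha
          obtain ⟨i, x, y, hxy, hx, hy⟩ := c.edge_surj huv
          refine ⟨⟨⟨i, x⟩, hx⟩, ?_⟩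
          have hcov : covered ⟨⟨i, x⟩, hx⟩ j' := ⟨y, hxy, hy⟩
          refine ⟨⟨x, Or.inl rfl⟩, ⟨hcov.choose, Or.inr ⟨j', hcov, rfl⟩⟩, ?_, hx, ?_⟩
          · exact hcov.choose_spec.1
          · exact hcov.choose_spec.2
        · -- u = inr j, v = inl a'
          have ha : a' = 0 := Subsingleton.elim a' 0
          subst ha
          obtain ⟨i, x, y, hxy, hx, hy⟩ := c.edge_surj huv
          refine ⟨⟨⟨i, y⟩, hy⟩, ?_⟩
          have hcov : covered ⟨⟨i, y⟩, hy⟩ j := ⟨x, hxy.symm, hx⟩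
          refine ⟨⟨hcov.choose, Or.inr ⟨j, hcov, rfl⟩⟩, ⟨y, Or.inl rfl⟩, ?_, ?_, hy⟩
          · exact hcov.choose_spec.1.symm
          · exact hcov.choose_spec.2
        · simp at huv }
  have hinj : c'.Injective := by
    intro p x y hxy
    have hxy' : c.φ p.1.1 x.val = c.φ p.1.1 y.val := hxy
    rcases x.2 with hx | ⟨j, hj, hx⟩ <;> rcases y.2 with hy | ⟨j', hj', hy⟩
    · exact Subtype.ext (hx.trans hy.symm)
    · exfalso
      rw [hx, hy, p.2, hj'.choose_spec.2] at hxy'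
      exact Sum.inl_ne_inr hxy'
    · exfalso
      rw [hx, hy, p.2, hj.choose_spec.2] at hxy'
      exact Sum.inl_ne_inr hxy'.symm
    · rw [hx, hy, hj.choose_spec.2, hj'.choose_spec.2] at hxy'
      have : j = j' := Sum.inr_injective hxy'
      subst this
      exact Subtype.ext (by rw [hx, hy])
  refine ⟨c', ?_, hinj, ?_⟩
  · intro p
    exact hher _ _ (hc p.1.1) (S p)
  · -- locality: every fiber injects into P
    intro v
    have hP : Nat.card P ≤ s := hl (Sum.inl 0)
    refine le_trans ?_ hP
    haveI : Finite P := c'.finι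
    have : Function.Injective
        (fun q : {q : Σ p : P, S p // c'.φ q.1 q.2 = v} => q.1.1) := by
      rintro ⟨⟨p₁, x₁⟩, h₁⟩ ⟨⟨p₂, x₂⟩, h₂⟩ hq
      simp only at hq
      subst hq
      have : x₁ = x₂ := hinj p₁ (h₁.trans h₂.symm)
      subst this
      rfl
    exact Nat.card_le_card_of_injective _ this

/-- for a hereditary guest class containing `K₂` and every star
`K_{1,n}`, the folded and local covering numbers coincide. -/
theorem folded_eq_local_on_stars (𝒢 : GraphClass) (h2 : 𝒢.ContainsK2)
    (hher : 𝒢.Hereditary) (n : ℕ) :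
    foldedCN 𝒢 (completeBipartiteGraph (Fin 1) (Fin n)) =
      localCN 𝒢 (completeBipartiteGraph (Fin 1) (Fin n)) := by
  unfold foldedCN localCN
  congr 1
  ext s
  constructor
  · rintro ⟨c, hc, hl⟩
    obtain ⟨c', h1, h2, h3⟩ := exists_inj_cover 𝒢 hher c hc hl
    exact ⟨c', h1, h2, h3⟩
  · rintro ⟨c, hc, _, hl⟩
    exact ⟨c, hc, hl⟩
end

section
/- Every graph H with maximum average degree at most d is the union of at most 2d weak induced star forests, i.e., there are at most ⌈2d⌉ star forests F₁,…,F_k, each of whose connected components is an induced subgraph of H, whose union of edge sets is E(H). -/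
open SimpleGraph

/-! ### Auxiliary machinery for STATEMENT 9 -/

namespace SF9

open Finset

variable {V : Type} [Fintype V]

/-- Pick an element of `range k` avoiding `B` (when possible). -/
noncomputable def pick (k : ℕ) (B : Finset ℕ) : ℕ :=
  if h : ((Finset.range k) \ B).Nonempty then ((Finset.range k) \ B).min' h else 0

lemma pick_mem {k : ℕ} {B : Finset ℕ} (h : B.card < k) :
    pick k B ∈ Finset.range k \ B := by
  have h1 : 0 < ((Finset.range k) \ B).card := by
    have := Finset.le_card_sdiff B (Finset.range k)
    rw [Finset.card_range] at this
    omega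
  have hne := Finset.card_pos.mp h1
  rw [pick, dif_pos hne]
  exact Finset.min'_mem _ _

open scoped Classical in
/-- Siblings of `v` at `u` : back-neighbours `w` of `v` (w.r.t. `rank`) that lie
above `u` and are adjacent to `u`. -/
noncomputable def sibs (H : SimpleGraph V) (rank : V → ℕ) (v u : V) : Finset V :=
  Finset.univ.filter fun w => H.Adj v w ∧ rank w < rank v ∧ rank u < rank w ∧ H.Adj w u

open scoped Classical in
/-- Back-neighbours of `v` lying below `u`. -/
noncomputable def lows (H : SimpleGraph V) (rank : V → ℕ) (v u : V) : Finset V :=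
  Finset.univ.filter fun w => H.Adj v w ∧ rank w < rank v ∧ rank w < rank u

/-- The greedy colouring of the directed edge `v → u` (where `rank u < rank v`). -/
noncomputable def col (H : SimpleGraph V) (rank : V → ℕ) (k : ℕ) (v u : V) : ℕ :=
  pick k
    (((sibs H rank v u).attach.image fun w => col H rank k w.1 u) ∪
     ((lows H rank v u).attach.image fun w => col H rank k v w.1))
termination_by (rank v, rank u)
decreasing_by
  · have hw := w.2
    simp only [sibs, Finset.mem_filter] at hw
    exact Prod.Lex.left _ _ hw.2.2.1
  · have hw := w.2
    simp only [lows, Finset.mem_filter] at hw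
    exact Prod.Lex.right _ hw.2.2.2

/-- The forbidden set of colours for the edge `v → u`. -/
noncomputable def Bset (H : SimpleGraph V) (rank : V → ℕ) (k : ℕ) (v u : V) : Finset ℕ :=
  ((sibs H rank v u).attach.image fun w => col H rank k w.1 u) ∪
  ((lows H rank v u).attach.image fun w => col H rank k v w.1)

lemma col_eq (H : SimpleGraph V) (rank : V → ℕ) (k : ℕ) (v u : V) :
    col H rank k v u = pick k (Bset H rank k v u) := by
  rw [col, Bset]

open scoped Classical in
/-- Hypotheses on the rank function: injective with back-degree at most `k`. -/
structure Good (H : SimpleGraph V) (rank : V → ℕ) (k : ℕ) : Prop where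
  inj : Function.Injective rank
  back : ∀ v, ((Finset.univ.filter fun u => H.Adj v u ∧ rank u < rank v)).card ≤ k

variable {H : SimpleGraph V} {rank : V → ℕ} {k : ℕ}

open scoped Classical in
lemma Bset_card_lt (hg : Good H rank k) {v u : V}
    (ha : H.Adj v u) (hr : rank u < rank v) : (Bset H rank k v u).card < k := by
  classical
  set BF : Finset V := Finset.univ.filter fun w => H.Adj v w ∧ rank w < rank v with hBF
  have hu : u ∈ BF := by simp [hBF, ha, hr]
  have hsub : sibs H rank v u ∪ lows H rank v u ⊆ BF.erase u := by
    intro w hw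
    rcases Finset.mem_union.mp hw with h | h
    · simp only [sibs, Finset.mem_filter] at h
      refine Finset.mem_erase.mpr ⟨?_, by simp [hBF, h.2.1, h.2.2.1]⟩
      intro hwu; subst hwu; exact lt_irrefl _ h.2.2.2.1
    · simp only [lows, Finset.mem_filter] at h
      refine Finset.mem_erase.mpr ⟨?_, by simp [hBF, h.2.1, h.2.2.1]⟩
      intro hwu; subst hwu; exact lt_irrefl _ h.2.2.2
  have hd : Disjoint (sibs H rank v u) (lows H rank v u) := by
    rw [Finset.disjoint_left]
    intro w h1 h2
    simp only [sibs, Finset.mem_filter] at h1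
    simp only [lows, Finset.mem_filter] at h2
    exact absurd (h1.2.2.2.1.trans h2.2.2.2) (lt_irrefl _)
  have hk1 : 1 ≤ BF.card := Finset.card_pos.mpr ⟨u, hu⟩
  have hbk : BF.card ≤ k := hg.back v
  have hcards : (sibs H rank v u).card + (lows H rank v u).card ≤ BF.card - 1 := by
    rw [← Finset.card_union_of_disjoint hd]
    calc (sibs H rank v u ∪ lows H rank v u).card ≤ (BF.erase u).card :=
          Finset.card_le_card hsub
      _ = BF.card - 1 := Finset.card_erase_of_mem hu
  have h1 : (Bset H rank k v u).card ≤
      (sibs H rank v u).card + (lows H rank v u).card := by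
    refine (Finset.card_union_le _ _).trans ?_
    gcongr
    · exact (Finset.card_image_le).trans (by rw [Finset.card_attach])
    · exact (Finset.card_image_le).trans (by rw [Finset.card_attach])
  omega

lemma col_spec (hg : Good H rank k) {v u : V} (ha : H.Adj v u) (hr : rank u < rank v) :
    col H rank k v u < k ∧ col H rank k v u ∉ Bset H rank k v u := by
  have := pick_mem (Bset_card_lt hg ha hr)
  rw [col_eq]
  rw [Finset.mem_sdiff, Finset.mem_range] at this
  exact this

lemma mem_Bset_sib {v u w : V} (hw : w ∈ sibs H rank v u) :
    col H rank k w u ∈ Bset H rank k v u :=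
  Finset.mem_union_left _ (Finset.mem_image.mpr ⟨⟨w, hw⟩, Finset.mem_attach _ _, rfl⟩)

lemma mem_Bset_low {v u w : V} (hw : w ∈ lows H rank v u) :
    col H rank k v w ∈ Bset H rank k v u :=
  Finset.mem_union_right _ (Finset.mem_image.mpr ⟨⟨w, hw⟩, Finset.mem_attach _ _, rfl⟩)

lemma col_ne_lower (hg : Good H rank k) {v u u' : V}
    (ha : H.Adj v u) (hr : rank u < rank v)
    (ha' : H.Adj v u') (hr' : rank u' < rank u) :
    col H rank k v u ≠ col H rank k v u' := by
  intro hEq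
  have hmem : u' ∈ lows H rank v u := by
    simp only [lows, Finset.mem_filter]
    exact ⟨Finset.mem_univ _, ha', hr'.trans hr, hr'⟩
  exact (col_spec hg ha hr).2 (hEq ▸ mem_Bset_low hmem)

/-- Uniqueness: two back-edges at `v` of the same colour go to the same vertex. -/
lemma col_inj (hg : Good H rank k) {v u u' : V}
    (ha : H.Adj v u) (hr : rank u < rank v)
    (ha' : H.Adj v u') (hr' : rank u' < rank v)
    (hc : col H rank k v u = col H rank k v u') : u = u' := by
  by_contra hne
  rcases lt_trichotomy (rank u) (rank u') with h | h | h
  · exact col_ne_lower hg ha' hr' ha h hc.symm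
  · exact hne (hg.inj h)
  · exact col_ne_lower hg ha hr ha' h hc

/-- Sibling separation: adjacent co-leaves of the same centre get different colours. -/
lemma col_ne_sib (hg : Good H rank k) {v w u : V}
    (hvu : H.Adj v u) (hrv : rank u < rank v)
    (hwu : H.Adj w u) (hru : rank u < rank w) (hwv : rank w < rank v)
    (hvw : H.Adj v w) :
    col H rank k v u ≠ col H rank k w u := by
  intro hEq
  have hmem : w ∈ sibs H rank v u := by
    simp only [sibs, Finset.mem_filter]
    exact ⟨Finset.mem_univ _, hvw, hwv, hru, hwu⟩
  exact (col_spec hg hvu hrv).2 (hEq ▸ mem_Bset_sib hmem)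

open scoped Classical in
/-- Depth of a vertex in the forest of colour `i`. -/
noncomputable def depth (H : SimpleGraph V) (rank : V → ℕ) (k : ℕ) (i : ℕ) (v : V) : ℕ :=
  if h : ∃ u, H.Adj v u ∧ rank u < rank v ∧ col H rank k v u = i then
    depth H rank k i h.choose + 1
  else 0
termination_by rank v
decreasing_by exact h.choose_spec.2.1

lemma depth_eq (hg : Good H rank k) {v u : V} {i : ℕ}
    (ha : H.Adj v u) (hr : rank u < rank v) (hc : col H rank k v u = i) :
    depth H rank k i v = depth H rank k i u + 1 := by
  have h : ∃ u, H.Adj v u ∧ rank u < rank v ∧ col H rank k v u = i := ⟨u, ha, hr, hc⟩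
  have hcu : h.choose = u :=
    col_inj hg h.choose_spec.1 h.choose_spec.2.1 ha hr
      (h.choose_spec.2.2.trans hc.symm)
  rw [depth, dif_pos h, hcu]

/-- `tl i b x y` : `x → y` is an edge of the class `(i,b)`, `x` the leaf, `y` the centre. -/
def tl (H : SimpleGraph V) (rank : V → ℕ) (k : ℕ) (i b : ℕ) (x y : V) : Prop :=
  H.Adj x y ∧ rank y < rank x ∧ col H rank k x y = i ∧ depth H rank k i y % 2 = b

/-- The star forest of class `(i, b)`. -/
def G2 (H : SimpleGraph V) (rank : V → ℕ) (k : ℕ) (i b : ℕ) : SimpleGraph V where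
  Adj x y := tl H rank k i b x y ∨ tl H rank k i b y x
  symm := ⟨fun x y h => Or.symm h⟩
  loopless := ⟨fun x h => by rcases h with h | h <;> exact H.irrefl h.1⟩

variable {i b : ℕ}

lemma tl_unique (hg : Good H rank k) {x y y' : V}
    (h : tl H rank k i b x y) (h' : tl H rank k i b x y') : y = y' :=
  col_inj hg h.1 h.2.1 h'.1 h'.2.1 (h.2.2.1.trans h'.2.2.1.symm)

lemma tl_not_chain (hg : Good H rank k) {x y z : V}
    (h : tl H rank k i b x y) (h' : tl H rank k i b y z) : False := by
  have hd := depth_eq hg h'.1 h'.2.1 h'.2.2.1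
  have h1 := h.2.2.2
  have h2 := h'.2.2.2
  omega

lemma tl_sib (hg : Good H rank k) {x y u : V}
    (hx : tl H rank k i b x u) (hy : tl H rank k i b y u)
    (hne : x ≠ y) (hadj : H.Adj x y) : False := by
  rcases lt_trichotomy (rank x) (rank y) with h | h | h
  · exact col_ne_sib hg hy.1 hy.2.1 hx.1 hx.2.1 h hadj.symm
      (hy.2.2.1.trans hx.2.2.1.symm)
  · exact hne (hg.inj h)
  · exact col_ne_sib hg hx.1 hx.2.1 hy.1 hy.2.1 h hadj
      (hx.2.2.1.trans hy.2.2.1.symm)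

lemma tail_unique_nb (hg : Good H rank k) {x y z : V}
    (h : tl H rank k i b x y) (hz : (G2 H rank k i b).Adj x z) : z = y := by
  rcases hz with h' | h'
  · exact tl_unique hg h' h ▸ rfl
  · exact (tl_not_chain hg h' h).elim

lemma noP4 (hg : Good H rank k) :
    ∀ a b' c d', (G2 H rank k i b).Adj a b' → (G2 H rank k i b).Adj b' c →
      (G2 H rank k i b).Adj c d' → a = c ∨ b' = d' := by
  intro a b' c d' hab hbc hcd
  rcases hbc with h | h
  · rcases hab with h' | h'
    · exact (tl_not_chain hg h' h).elim
    · left; exact tl_unique hg h' h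
  · rcases hcd with h' | h'
    · right; exact (tl_unique hg h' h).symm
    · exact (tl_not_chain hg h' h).elim

lemma penult {G : SimpleGraph V} {a b' : V} (p : G.Walk a b') (hp : 1 ≤ p.length) :
    ∃ y, G.Adj y b' ∧ y ∈ p.support ∧ y ≠ b' := by
  induction p with
  | nil => simp at hp
  | @cons x c b'' h q ih =>
    rcases Nat.eq_zero_or_pos q.length with h0 | h1
    · have hcb : c = b'' := SimpleGraph.Walk.eq_of_length_eq_zero h0
      subst hcb
      exact ⟨x, h, by simp, (G.ne_of_adj h)⟩
    · obtain ⟨y, hy1, hy2, hy3⟩ := ih h1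
      exact ⟨y, hy1, by simp [hy2], hy3⟩

lemma acyc (hg : Good H rank k) : (G2 H rank k i b).IsAcyclic := by
  intro v c hc
  have h3 := hc.three_le_length
  cases c with
  | nil => simp at h3
  | @cons _ w _ hvw p =>
    obtain ⟨hp, _⟩ := (SimpleGraph.Walk.cons_isCycle_iff p hvw).mp hc
    have hlen : 2 ≤ p.length := by
      simp only [SimpleGraph.Walk.length_cons] at h3; omega
    cases p with
    | nil => simp at hlen
    | @cons _ x _ hwx q =>
      obtain ⟨hq, hws⟩ := (SimpleGraph.Walk.cons_isPath_iff hwx q).mp hp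
      have hxv : x ≠ v := by
        rintro rfl
        have : q = SimpleGraph.Walk.nil := SimpleGraph.Walk.isPath_iff_eq_nil.mp hq
        rw [this] at hlen; simp at hlen
      rcases hvw with htl | htl
      · have hq1 : 1 ≤ q.length := by
          simp only [SimpleGraph.Walk.length_cons] at hlen; omega
        obtain ⟨y, hyv, hys, _⟩ := penult q hq1
        have : y = w := tail_unique_nb hg htl hyv.symm
        exact hws (this ▸ hys)
      · exact hxv (tail_unique_nb hg htl hwx)

lemma reach_rel (hg : Good H rank k) {x y : V} (p : (G2 H rank k i b).Walk x y) :
    x = y ∨ (G2 H rank k i b).Adj x y ∨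
      ∃ cpt, tl H rank k i b x cpt ∧ tl H rank k i b y cpt := by
  induction p with
  | nil => left; rfl
  | @cons x z y h q ih =>
    rcases ih with rfl | hzy | ⟨cpt, hz, hy⟩
    · right; left; exact h
    · rcases h with hxz | hzx
      · rcases hzy with hzy' | hyz
        · exact (tl_not_chain hg hxz hzy').elim
        · by_cases hxy : x = y
          · left; exact hxy
          · right; right; exact ⟨z, hxz, hyz⟩
      · rcases hzy with hzy' | hyz
        · left; exact tl_unique hg hzx hzy'
        · exact (tl_not_chain hg hyz hzx).elim
    · rcases h with hxz | hzx
      · exact (tl_not_chain hg hxz hz).elim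
      · have hxc : x = cpt := tl_unique hg hzx hz
        subst hxc
        right; left; exact Or.inr hy

lemma weakInd (hg : Good H rank k) : IsWeakInduced (G2 H rank k i b) H := by
  constructor
  · intro a b' h
    rcases h with h | h
    · exact h.1
    · exact h.1.symm
  · intro u v hr hadj
    obtain ⟨p⟩ := hr
    rcases reach_rel hg p with rfl | h | ⟨cpt, h1, h2⟩
    · exact (H.irrefl hadj).elim
    · exact h
    · exact (tl_sib hg h1 h2 (H.ne_of_adj hadj) hadj).elim

lemma starF (hg : Good H rank k) : IsStarForest (G2 H rank k i b) :=
  ⟨acyc hg, noP4 hg⟩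

end SF9


namespace SF9

open Finset

variable {V : Type} [Fintype V]

open scoped Classical in
lemma degree_induce (H : SimpleGraph V) (s : Finset V) (a : ↥((s : Set V))) :
    (H.induce (s : Set V)).degree a = (s.filter fun u => H.Adj ↑a u).card := by
  rw [← SimpleGraph.card_neighborFinset_eq_degree]
  refine Finset.card_bij (fun b _ => (b : V)) ?_ ?_ ?_
  · intro b hb
    rw [SimpleGraph.mem_neighborFinset] at hb
    exact Finset.mem_filter.mpr ⟨Finset.mem_coe.mp b.2, hb⟩
  · intro b _ b' _ h
    exact Subtype.ext h
  · intro u hu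
    obtain ⟨hus, hadj⟩ := Finset.mem_filter.mp hu
    refine ⟨⟨u, Finset.mem_coe.mpr hus⟩, ?_, rfl⟩
    rw [SimpleGraph.mem_neighborFinset]
    exact hadj

open scoped Classical in
lemma sum_deg (H : SimpleGraph V) (s : Finset V) :
    ∑ u ∈ s, (s.filter fun w => H.Adj u w).card
      = 2 * Nat.card (H.induce (s : Set V)).edgeSet := by
  have h1 := SimpleGraph.sum_degrees_eq_twice_card_edges (H.induce (s : Set V))
  have h2 : ∑ a : ↥((s : Set V)), (H.induce (s : Set V)).degree a
      = ∑ u ∈ s, (s.filter fun w => H.Adj u w).card := by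
    refine Finset.sum_bij (fun a _ => (a : V)) ?_ ?_ ?_ ?_
    · intro a _; exact Finset.mem_coe.mp a.2
    · intro a _ a' _ h; exact Subtype.ext h
    · intro u hu; exact ⟨⟨u, Finset.mem_coe.mpr hu⟩, Finset.mem_univ _, rfl⟩
    · intro a _; exact degree_induce H s a
  have h3 : Nat.card (H.induce (s : Set V)).edgeSet
      = (H.induce (s : Set V)).edgeFinset.card := by
    rw [Nat.card_eq_fintype_card, SimpleGraph.edgeFinset_card]
  rw [← h2, h1, h3]

open scoped Classical in
lemma exists_small {H : SimpleGraph V} {d : ℚ} (hmad : madLE H d)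
    (s : Finset V) (hs : s.Nonempty) :
    ∃ v ∈ s, (s.filter fun u => H.Adj v u).card ≤ ⌊d⌋₊ := by
  by_contra hall
  push_neg at hall
  have h1 : s.card * (⌊d⌋₊ + 1) ≤ ∑ v ∈ s, (s.filter fun u => H.Adj v u).card := by
    calc s.card * (⌊d⌋₊ + 1) = ∑ _v ∈ s, (⌊d⌋₊ + 1) := by
          rw [Finset.sum_const, smul_eq_mul]
      _ ≤ ∑ v ∈ s, (s.filter fun u => H.Adj v u).card :=
          Finset.sum_le_sum fun v hv => hall v hv
  rw [sum_deg H s] at h1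
  have h2 := hmad (s : Set V) (Finset.coe_nonempty.mpr hs)
  have h3 : (Nat.card ↥((s : Set V)) : ℚ) = s.card := by
    rw [Nat.card_coe_set_eq, Set.ncard_coe_finset]
  rw [h3] at h2
  have hc : ((s.card * (⌊d⌋₊ + 1) : ℕ) : ℚ)
      ≤ ((2 * Nat.card (H.induce (s : Set V)).edgeSet : ℕ) : ℚ) := by exact_mod_cast h1
  push_cast at hc
  have hpos : (0 : ℚ) < s.card := by exact_mod_cast Finset.card_pos.mpr hs
  have h5 : (⌊d⌋₊ : ℚ) + 1 ≤ d := by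
    have hmul : ((⌊d⌋₊ : ℚ) + 1) * s.card ≤ d * s.card := by
      rw [mul_comm]
      exact hc.trans h2
    exact le_of_mul_le_mul_right hmul hpos
  have h6 := Nat.lt_floor_add_one d
  linarith

open scoped Classical in
lemma peel (H : SimpleGraph V) (k : ℕ)
    (hsmall : ∀ s : Finset V, s.Nonempty →
      ∃ v ∈ s, (s.filter fun u => H.Adj v u).card ≤ k) :
    ∀ (n : ℕ) (s : Finset V), s.card = n → ∃ r : V → ℕ,
      (∀ v ∈ s, r v < n) ∧ Set.InjOn r ↑s ∧
      (∀ v ∈ s, (s.filter fun u => H.Adj v u ∧ r u < r v).card ≤ k) := by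
  intro n
  induction n with
  | zero =>
    intro s hs
    have hse : s = ∅ := Finset.card_eq_zero.mp hs
    subst hse
    exact ⟨fun _ => 0, by simp, by simp, by simp⟩
  | succ m ih =>
    intro s hs
    have hne : s.Nonempty := Finset.card_pos.mp (by omega)
    obtain ⟨v, hv, hdeg⟩ := hsmall s hne
    obtain ⟨r', h1, h2, h3⟩ := ih (s.erase v) (by rw [Finset.card_erase_of_mem hv, hs]; omega)
    refine ⟨fun u => if u = v then m else r' u, ?_, ?_, ?_⟩
    · intro u hu
      by_cases h : u = v
      · simp [h]
      · simp only [if_neg h]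
        exact (h1 u (Finset.mem_erase.mpr ⟨h, hu⟩)).trans (Nat.lt_succ_self m)
    · intro x hx y hy hxy
      simp only at hxy
      by_cases hxv : x = v <;> by_cases hyv : y = v
      · rw [hxv, hyv]
      · rw [if_pos hxv, if_neg hyv] at hxy
        have := h1 y (Finset.mem_erase.mpr ⟨hyv, Finset.mem_coe.mp hy⟩)
        omega
      · rw [if_neg hxv, if_pos hyv] at hxy
        have := h1 x (Finset.mem_erase.mpr ⟨hxv, Finset.mem_coe.mp hx⟩)
        omega
      · rw [if_neg hxv, if_neg hyv] at hxy
        exact h2 (Finset.mem_coe.mpr (Finset.mem_erase.mpr ⟨hxv, Finset.mem_coe.mp hx⟩))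
          (Finset.mem_coe.mpr (Finset.mem_erase.mpr ⟨hyv, Finset.mem_coe.mp hy⟩)) hxy
    · intro u hu
      by_cases h : u = v
      · subst h
        refine (Finset.card_le_card ?_).trans hdeg
        intro w hw
        obtain ⟨hws, hw1, _⟩ := Finset.mem_filter.mp hw
        exact Finset.mem_filter.mpr ⟨hws, hw1⟩
      · have hu' : u ∈ s.erase v := Finset.mem_erase.mpr ⟨h, hu⟩
        refine (Finset.card_le_card ?_).trans (h3 u hu')
        intro w hw
        obtain ⟨hws, hw1, hw2⟩ := Finset.mem_filter.mp hw
        simp only [if_neg h] at hw2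
        have hwv : w ≠ v := by
          intro hwv
          subst hwv
          rw [if_pos rfl] at hw2
          have := h1 u hu'
          omega
        rw [if_neg hwv] at hw2
        exact Finset.mem_filter.mpr ⟨Finset.mem_erase.mpr ⟨hwv, hws⟩, hw1, hw2⟩

open scoped Classical in
lemma exists_rank (H : SimpleGraph V) (k : ℕ)
    (hsmall : ∀ s : Finset V, s.Nonempty →
      ∃ v ∈ s, (s.filter fun u => H.Adj v u).card ≤ k) :
    ∃ rank : V → ℕ, Good H rank k := by
  obtain ⟨r, _, h2, h3⟩ := peel H k hsmall Finset.univ.card Finset.univ rfl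
  refine ⟨r, ⟨?_, fun v => h3 v (Finset.mem_univ v)⟩⟩
  rw [← Set.injOn_univ]
  rwa [Finset.coe_univ] at h2

end SF9


/-- every graph with maximum average degree at most `d` is the
union of at most `⌈2d⌉` weak induced star forests. -/
theorem union_of_weak_induced_star_forests {V : Type} [Fintype V]
    (H : SimpleGraph V) (d : ℚ) (hmad : madLE H d) :
    ∃ k : ℕ, k ≤ ⌈2 * d⌉₊ ∧ ∃ F : Fin k → SimpleGraph V,
      (∀ i, IsStarForest (F i) ∧ IsWeakInduced (F i) H) ∧
      ∀ ⦃u v⦄, H.Adj u v → ∃ i, (F i).Adj u v := by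
  classical
  by_cases hE : ∃ u v, H.Adj u v
  · obtain ⟨u0, v0, h0⟩ := hE
    have hd1 : (1 : ℚ) ≤ d := by
      have hs : ({u0, v0} : Set V).Nonempty := ⟨u0, by simp⟩
      have h2 := hmad {u0, v0} hs
      have hcard2 : (Nat.card ↥({u0, v0} : Set V)) = 2 := by
        rw [Nat.card_coe_set_eq, Set.ncard_pair (H.ne_of_adj h0)]
      have hedge : 1 ≤ Nat.card (H.induce ({u0, v0} : Set V)).edgeSet := by
        haveI : Nonempty (H.induce ({u0, v0} : Set V)).edgeSet := by
          refine ⟨⟨s(⟨u0, by simp⟩, ⟨v0, by simp⟩), ?_⟩⟩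
          rw [SimpleGraph.mem_edgeSet]
          exact h0
        have := Nat.card_pos (α := ↥(H.induce ({u0, v0} : Set V)).edgeSet)
        omega
      rw [hcard2] at h2
      have hcast : (1 : ℚ) ≤ (Nat.card (H.induce ({u0, v0} : Set V)).edgeSet : ℚ) := by
        exact_mod_cast hedge
      push_cast at h2
      linarith
    have hd0 : (0 : ℚ) ≤ d := le_trans zero_le_one hd1
    obtain ⟨rank, hg⟩ := SF9.exists_rank H ⌊d⌋₊ (fun s hs => SF9.exists_small hmad s hs)
    refine ⟨2 * ⌊d⌋₊, ?_, fun j => SF9.G2 H rank ⌊d⌋₊ (j.1 / 2) (j.1 % 2),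
      fun j => ⟨SF9.starF hg, SF9.weakInd hg⟩, ?_⟩
    · have h1 : ((2 * ⌊d⌋₊ : ℕ) : ℚ) ≤ 2 * d := by
        push_cast
        have := Nat.floor_le hd0
        linarith
      calc 2 * ⌊d⌋₊ = ⌈((2 * ⌊d⌋₊ : ℕ) : ℚ)⌉₊ := (Nat.ceil_natCast _).symm
        _ ≤ ⌈2 * d⌉₊ := Nat.ceil_le_ceil h1
    · intro u v huv
      have hne : rank u ≠ rank v := fun h => H.ne_of_adj huv (hg.inj h)
      rcases lt_or_gt_of_ne hne with hlt | hlt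
      · set i := SF9.col H rank ⌊d⌋₊ v u with hi
        set b := SF9.depth H rank ⌊d⌋₊ i u % 2 with hb
        have hb2 : b < 2 := by
          rw [hb]
          exact Nat.mod_lt _ (by omega)
        have hik : i < ⌊d⌋₊ := (SF9.col_spec hg huv.symm hlt).1
        refine ⟨⟨2 * i + b, by omega⟩, ?_⟩
        show (SF9.G2 H rank ⌊d⌋₊ ((2 * i + b) / 2) ((2 * i + b) % 2)).Adj u v
        have e1 : (2 * i + b) / 2 = i := by omega
        have e2 : (2 * i + b) % 2 = b := by omega
        rw [e1, e2]
        exact Or.inr ⟨huv.symm, hlt, hi.symm, hb.symm⟩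
      · set i := SF9.col H rank ⌊d⌋₊ u v with hi
        set b := SF9.depth H rank ⌊d⌋₊ i v % 2 with hb
        have hb2 : b < 2 := by
          rw [hb]
          exact Nat.mod_lt _ (by omega)
        have hik : i < ⌊d⌋₊ := (SF9.col_spec hg huv hlt).1
        refine ⟨⟨2 * i + b, by omega⟩, ?_⟩
        show (SF9.G2 H rank ⌊d⌋₊ ((2 * i + b) / 2) ((2 * i + b) % 2)).Adj u v
        have e1 : (2 * i + b) / 2 = i := by omega
        have e2 : (2 * i + b) % 2 = b := by omega
        rw [e1, e2]
        exact Or.inl ⟨huv, hlt, hi.symm, hb.symm⟩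
  · exact ⟨0, Nat.zero_le _, fun i => ⊥, fun i => i.elim0, fun u v h => (hE ⟨u, v, h⟩).elim⟩
end

section
/- If G is a hereditary guest class containing K_2 with maximum average degree at most d, then for every graph H we have c_u(G,H) ≤ 2d·(c_f(G,H))². -/
open SimpleGraph

/-! ### Auxiliary lemmas -/

lemma exists_inj_fin {α : Type*} [Finite α] {n : ℕ} (h : Nat.card α ≤ n) :
    ∃ f : α → Fin n, Function.Injective f := by
  cases isEmpty_or_nonempty α with
  | inl hE => exact ⟨fun a => (hE.false a).elim, fun a => (hE.false a).elim⟩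
  | inr hN =>
    have hpos : Nat.card α ≠ 0 := Nat.card_ne_zero.2 ⟨hN, ‹Finite α›⟩
    let e := Nat.equivFinOfCardPos hpos
    exact ⟨fun a => Fin.castLE h (e a), fun a b hab => e.injective (Fin.castLE_injective h hab)⟩

section Counting

variable {V : Type} [Fintype V] {H : SimpleGraph V} (c : GraphCover H)

/-- ordered adjacent pairs inside `S` are at most `d*s*|S|`. -/
lemma cover_pairs_le {d : ℚ} {s : ℕ} (hd0 : 0 ≤ d)
    (hmad : ∀ i, madLE (c.G i) d) (hloc : c.IsLocal s) (S : Finset V) :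
    (Nat.card {q : V × V // q.1 ∈ S ∧ q.2 ∈ S ∧ H.Adj q.1 q.2} : ℚ) ≤ d * s * S.card := by
  classical
  haveI := c.finι
  haveI : ∀ i, Finite (c.W i) := c.finW
  haveI : Fintype c.ι := Fintype.ofFinite _
  haveI : ∀ i, Fintype (c.W i) := fun i => Fintype.ofFinite _
  set A := {q : V × V // q.1 ∈ S ∧ q.2 ∈ S ∧ H.Adj q.1 q.2} with hA
  set T : ∀ i : c.ι, Set (c.W i) := fun i => {x | c.φ i x ∈ S} with hT
  set B : c.ι → Type := fun i =>
    {ab : c.W i × c.W i // (c.G i).Adj ab.1 ab.2 ∧ ab.1 ∈ T i ∧ ab.2 ∈ T i} with hB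
  -- step 1 : injection A ↪ Σ B
  have hx : ∀ q : A, ∃ b : (Σ i, B i),
      c.φ b.1 b.2.val.1 = q.val.1 ∧ c.φ b.1 b.2.val.2 = q.val.2 := by
    rintro ⟨⟨u, v⟩, hu, hv, huv⟩
    obtain ⟨i, a, b, hab, ha, hb⟩ := c.edge_surj huv
    exact ⟨⟨i, ⟨(a, b), hab, by simp [hT, ha, hu], by simp [hT, hb, hv]⟩⟩, ha, hb⟩
  choose θ hθ1 hθ2 using hx
  have hinj : Function.Injective θ := by
    intro q q' h
    apply Subtype.ext
    apply Prod.ext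
    · rw [← hθ1 q, ← hθ1 q', h]
    · rw [← hθ2 q, ← hθ2 q', h]
  have h1 : Nat.card A ≤ Nat.card (Σ i, B i) := Nat.card_le_card_of_injective θ hinj
  -- step 2 : card of Σ B as a sum
  have h2 : (Nat.card (Σ i, B i) : ℚ) = ∑ i, (Nat.card (B i) : ℚ) := by
    simp [Nat.card_eq_fintype_card, Fintype.card_sigma]
  -- step 3 : per-guest bound
  have h3 : ∀ i, (Nat.card (B i) : ℚ) ≤ d * Nat.card (T i) := by
    intro i
    rcases Set.eq_empty_or_nonempty (T i) with hTe | hTne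
    · have : IsEmpty (B i) := by
        constructor; rintro ⟨⟨a, b⟩, -, ha, -⟩
        rw [hTe] at ha; exact ha
      have hc0 : Nat.card (B i) = 0 := Nat.card_of_isEmpty
      have hc0' : Nat.card (T i) = 0 := by rw [hTe]; simp
      rw [hc0, hc0']; simp
    · have e : B i ≃ ((c.G i).induce (T i)).Dart :=
        { toFun := fun ab => ⟨(⟨ab.val.1, ab.prop.2.1⟩, ⟨ab.val.2, ab.prop.2.2⟩), ab.prop.1⟩
          invFun := fun dt => ⟨(dt.toProd.1.val, dt.toProd.2.val),
            dt.adj, dt.toProd.1.prop, dt.toProd.2.prop⟩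
          left_inv := fun ab => rfl
          right_inv := fun dt => rfl }
      have hcard : Nat.card (B i) = 2 * Nat.card ((c.G i).induce (T i)).edgeSet := by
        rw [Nat.card_congr e]
        haveI : Fintype (T i) := Fintype.ofFinite _
        haveI : DecidableRel ((c.G i).induce (T i)).Adj := Classical.decRel _
        rw [Nat.card_eq_fintype_card, SimpleGraph.dart_card_eq_twice_card_edges]
        simp [Nat.card_eq_fintype_card, SimpleGraph.edgeFinset_card]
      rw [hcard]
      have := hmad i (T i) hTne
      push_cast
      push_cast at this
      linarith
  -- step 4 : total preimage bound
  have h4 : (Nat.card (Σ i, (T i : Type)) : ℚ) ≤ (s : ℚ) * S.card := by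
    have hvlab : ∀ v : V, ∃ f : {p : Σ i, c.W i // c.φ p.1 p.2 = v} → Fin s,
        Function.Injective f := fun v => exists_inj_fin (hloc v)
    choose lab hlab using hvlab
    have lab_congr : ∀ (v v' : V) (h : v = v') (p : Σ i, c.W i) (hp : c.φ p.1 p.2 = v)
        (hp' : c.φ p.1 p.2 = v'), lab v ⟨p, hp⟩ = lab v' ⟨p, hp'⟩ := by
      intro v v' h p hp hp'; subst h; rfl
    have hg : ∃ g : (Σ i, (T i : Type)) → (S × Fin s), Function.Injective g := by
      refine ⟨fun p => ⟨⟨c.φ p.1 p.2.val, p.2.prop⟩, lab _ ⟨⟨p.1, p.2.val⟩, rfl⟩⟩, ?_⟩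
      rintro ⟨i, x, hx⟩ ⟨i', x', hx'⟩ h
      simp only [Prod.mk.injEq, Subtype.mk.injEq] at h
      obtain ⟨h1, h2⟩ := h
      have h2' : lab (c.φ i x) ⟨⟨i, x⟩, rfl⟩ = lab (c.φ i x) ⟨⟨i', x'⟩, h1.symm⟩ := by
        rw [h2]; exact lab_congr _ _ h1.symm ⟨i', x'⟩ rfl h1.symm
      have := hlab (c.φ i x) h2'
      simp only [Subtype.mk.injEq] at this
      obtain ⟨hi, hx2⟩ := Sigma.mk.inj_iff.mp this
      subst hi
      cases eq_of_heq hx2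
      rfl
    obtain ⟨g, hginj⟩ := hg
    have := Nat.card_le_card_of_injective g hginj
    have hcard : Nat.card (S × Fin s) = S.card * s := by
      simp [Nat.card_eq_fintype_card]
    rw [hcard] at this
    calc (Nat.card (Σ i, (T i : Type)) : ℚ) ≤ (S.card * s : ℕ) := by exact_mod_cast this
      _ = (s : ℚ) * S.card := by push_cast; ring
  have h5 : (Nat.card (Σ i, (T i : Type)) : ℚ) = ∑ i, (Nat.card (T i) : ℚ) := by
    simp [Nat.card_eq_fintype_card, Fintype.card_sigma]
  calc (Nat.card A : ℚ) ≤ (Nat.card (Σ i, B i) : ℚ) := by exact_mod_cast h1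
    _ = ∑ i, (Nat.card (B i) : ℚ) := h2
    _ ≤ ∑ i, d * (Nat.card (T i) : ℚ) := Finset.sum_le_sum (fun i _ => h3 i)
    _ = d * ∑ i, (Nat.card (T i) : ℚ) := by rw [Finset.mul_sum]
    _ = d * (Nat.card (Σ i, (T i : Type)) : ℚ) := by rw [h5]
    _ ≤ d * ((s : ℚ) * S.card) := by
        apply mul_le_mul_of_nonneg_left h4 hd0
    _ = d * s * S.card := by ring

end Counting

section Degeneracy

variable {V : Type} [Fintype V] {H : SimpleGraph V}

lemma exists_small_deg {d : ℚ} {s : ℕ} (c : GraphCover H) (hd0 : 0 ≤ d)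
    (hmad : ∀ i, madLE (c.G i) d) (hloc : c.IsLocal s) {S : Finset V} (hS : S.Nonempty) :
    ∃ v ∈ S, (Nat.card {w : V // w ∈ S ∧ H.Adj v w} : ℚ) ≤ d * s := by
  classical
  by_contra hcon
  push_neg at hcon
  set A := {q : V × V // q.1 ∈ S ∧ q.2 ∈ S ∧ H.Adj q.1 q.2} with hA
  have e : A ≃ Σ v : {x // x ∈ S}, {w : V // w ∈ S ∧ H.Adj v.val w} :=
    { toFun := fun q => ⟨⟨q.val.1, q.prop.1⟩, ⟨q.val.2, q.prop.2.1, q.prop.2.2⟩⟩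
      invFun := fun p => ⟨(p.1.val, p.2.val), p.1.prop, p.2.prop.1, p.2.prop.2⟩
      left_inv := fun q => rfl
      right_inv := fun p => rfl }
  have hsum : (Nat.card A : ℚ) = ∑ v : {x // x ∈ S}, (Nat.card {w : V // w ∈ S ∧ H.Adj v.val w} : ℚ) := by
    rw [Nat.card_congr e]
    simp [Nat.card_eq_fintype_card, Fintype.card_sigma]
  have hlt : (d * s) * S.card < (Nat.card A : ℚ) := by
    rw [hsum]
    have hne : (Finset.univ : Finset {x // x ∈ S}).Nonempty := by
      obtain ⟨v, hv⟩ := hS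
      exact ⟨⟨v, hv⟩, Finset.mem_univ _⟩
    have := Finset.sum_lt_sum_of_nonempty hne
      (f := fun v : {x // x ∈ S} => d * s)
      (g := fun v : {x // x ∈ S} => (Nat.card {w : V // w ∈ S ∧ H.Adj v.val w} : ℚ))
      (fun v _ => hcon v.val v.prop)
    calc (d * s) * S.card = ∑ v : {x // x ∈ S}, d * s := by
          rw [Finset.sum_const, Finset.card_univ, Fintype.card_coe]; ring
      _ < _ := this
  have := cover_pairs_le c hd0 hmad hloc S
  rw [← hA] at this
  linarith

lemma exists_rank (D : ℕ)
    (hdeg : ∀ S : Finset V, S.Nonempty → ∃ v ∈ S, Nat.card {w : V // w ∈ S ∧ H.Adj v w} ≤ D) :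
    ∀ S : Finset V, ∃ rk : V → ℕ, Set.InjOn rk S ∧ (∀ v ∈ S, rk v < S.card) ∧
      (∀ v ∈ S, Nat.card {w : V // w ∈ S ∧ H.Adj v w ∧ rk v < rk w} ≤ D) := by
  classical
  suffices h : ∀ n (S : Finset V), S.card = n → ∃ rk : V → ℕ, Set.InjOn rk S ∧
      (∀ v ∈ S, rk v < S.card) ∧
      (∀ v ∈ S, Nat.card {w : V // w ∈ S ∧ H.Adj v w ∧ rk v < rk w} ≤ D) by
    exact fun S => h S.card S rfl
  intro n
  induction n using Nat.strong_induction_on with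
  | _ n ih =>
  intro S hn
  rcases S.eq_empty_or_nonempty with rfl | hS
  · exact ⟨fun _ => 0, by simp [Set.InjOn], by simp, by simp⟩
  · obtain ⟨v₀, hv₀S, hv₀⟩ := hdeg S hS
    set S' := S.erase v₀ with hS'
    have hcard' : S'.card < n := by
      rw [← hn, hS']
      exact Finset.card_erase_lt_of_mem hv₀S
    obtain ⟨rk', hinj', hbd', hdeg'⟩ := ih S'.card hcard' S' rfl
    refine ⟨fun w => if w = v₀ then 0 else rk' w + 1, ?_, ?_, ?_⟩
    · intro a ha b hb hab
      by_cases h1 : a = v₀ <;> by_cases h2 : b = v₀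
      · rw [h1, h2]
      · simp only [h1, h2, if_true, if_false] at hab; omega
      · simp only [h1, h2, if_true, if_false] at hab; omega
      · simp only [h1, h2, if_false] at hab
        exact hinj' (Finset.mem_erase.2 ⟨h1, ha⟩) (Finset.mem_erase.2 ⟨h2, hb⟩) (by omega)
    · intro v hv
      by_cases h1 : v = v₀
      · simp only [h1, if_true]
        exact Finset.card_pos.2 hS
      · simp only [h1, if_false]
        have := hbd' v (Finset.mem_erase.2 ⟨h1, hv⟩)
        have h2 : S'.card < S.card := by
          rw [hS']; exact Finset.card_erase_lt_of_mem hv₀S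
        omega
    · intro v hv
      by_cases h1 : v = v₀
      · have hmap : ∀ w : {w : V // w ∈ S ∧ H.Adj v w ∧
            (if v = v₀ then 0 else rk' v + 1) < (if w = v₀ then 0 else rk' w + 1)},
            w.val ∈ S ∧ H.Adj v₀ w.val := fun w => ⟨w.prop.1, h1 ▸ w.prop.2.1⟩
        refine le_trans (Nat.card_le_card_of_injective
          (fun w => (⟨w.val, hmap w⟩ : {w : V // w ∈ S ∧ H.Adj v₀ w})) ?_) hv₀
        intro a b hab
        have := congrArg Subtype.val hab
        exact Subtype.ext this
      · have hmap : ∀ w : {w : V // w ∈ S ∧ H.Adj v w ∧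
            (if v = v₀ then 0 else rk' v + 1) < (if w = v₀ then 0 else rk' w + 1)},
            w.val ∈ S' ∧ H.Adj v w.val ∧ rk' v < rk' w.val := by
          rintro ⟨w, hwS, hadj, hlt⟩
          simp only [h1, if_false] at hlt
          have hw0 : w ≠ v₀ := by
            intro h; rw [h] at hlt; simp at hlt
          simp only [hw0, if_false] at hlt
          show w ∈ S' ∧ H.Adj v w ∧ rk' v < rk' w
          exact ⟨Finset.mem_erase.2 ⟨hw0, hwS⟩, hadj, by omega⟩
        refine le_trans (Nat.card_le_card_of_injective
          (fun w => (⟨w.val, hmap w⟩ : {w : V // w ∈ S' ∧ H.Adj v w ∧ rk' v < rk' w})) ?_)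
          (hdeg' v (Finset.mem_erase.2 ⟨h1, hv⟩))
        intro a b hab
        have := congrArg Subtype.val hab
        exact Subtype.ext this

end Degeneracy

section Heights

variable {V : Type}

open Classical in
/-- the unique "up"-neighbour of `v` with label `k`, if any. -/
noncomputable def upf (H : SimpleGraph V) (rk : V → ℕ) {D : ℕ}
    (lab : ∀ v : V, {w : V // H.Adj v w ∧ rk v < rk w} → Fin D) (k : Fin D) (v : V) :
    Option V :=
  if h : ∃ w : {w : V // H.Adj v w ∧ rk v < rk w}, lab v w = k then some h.choose.val
  else none

lemma upf_some {H : SimpleGraph V} {rk : V → ℕ} {D : ℕ}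
    {lab : ∀ v : V, {w : V // H.Adj v w ∧ rk v < rk w} → Fin D} {k : Fin D} {v w : V}
    (h : upf H rk lab k v = some w) :
    ∃ hw : H.Adj v w ∧ rk v < rk w, lab v ⟨w, hw⟩ = k := by
  unfold upf at h
  split at h
  · rename_i he
    have hspec := he.choose_spec
    have hval : (he.choose : V) = w := Option.some_injective _ h
    refine ⟨hval ▸ he.choose.prop, ?_⟩
    have heq : (⟨w, hval ▸ he.choose.prop⟩ : {x : V // H.Adj v x ∧ rk v < rk x}) =
        he.choose := Subtype.ext hval.symm
    rw [heq]
    exact hspec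
  · exact absurd h (by simp)

lemma upf_eq {H : SimpleGraph V} {rk : V → ℕ} {D : ℕ}
    {lab : ∀ v : V, {w : V // H.Adj v w ∧ rk v < rk w} → Fin D}
    (hlabinj : ∀ v, Function.Injective (lab v)) {k : Fin D} {v w : V}
    (hw : H.Adj v w ∧ rk v < rk w) (hk : lab v ⟨w, hw⟩ = k) :
    upf H rk lab k v = some w := by
  unfold upf
  have he : ∃ x : {w : V // H.Adj v w ∧ rk v < rk w}, lab v x = k := ⟨⟨w, hw⟩, hk⟩
  rw [dif_pos he]
  have := he.choose_spec
  have : he.choose = ⟨w, hw⟩ := hlabinj v (this.trans hk.symm)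
  rw [this]

/-- height with fuel -/
noncomputable def hgt (H : SimpleGraph V) (rk : V → ℕ) {D : ℕ}
    (lab : ∀ v : V, {w : V // H.Adj v w ∧ rk v < rk w} → Fin D) (k : Fin D) :
    ℕ → V → ℕ
  | 0, _ => 0
  | (f + 1), v =>
    match upf H rk lab k v with
    | none => 0
    | some w => hgt H rk lab k f w + 1

lemma hgt_stab {H : SimpleGraph V} {rk : V → ℕ} {D N : ℕ}
    {lab : ∀ v : V, {w : V // H.Adj v w ∧ rk v < rk w} → Fin D} {k : Fin D}
    (hrk : ∀ v, rk v < N) :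
    ∀ f v, N - rk v ≤ f → hgt H rk lab k f v = hgt H rk lab k (f + 1) v := by
  intro f
  induction f with
  | zero => intro v hv; exact absurd hv (by have := hrk v; omega)
  | succ f ih =>
    intro v hv
    show hgt H rk lab k (f + 1) v = hgt H rk lab k (f + 2) v
    rcases hu : upf H rk lab k v with - | w
    · simp [hgt, hu]
    · obtain ⟨⟨hadj, hlt⟩, -⟩ := upf_some hu
      have hw : N - rk w ≤ f := by have := hrk v; omega
      have e1 : hgt H rk lab k (f + 1) v = hgt H rk lab k f w + 1 := by
        conv_lhs => rw [hgt]
        rw [hu]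
      have e2 : hgt H rk lab k (f + 1 + 1) v = hgt H rk lab k (f + 1) w + 1 := by
        conv_lhs => rw [hgt]
        rw [hu]
      rw [e1, e2, ih w hw]

lemma hgt_up {H : SimpleGraph V} {rk : V → ℕ} {D N : ℕ}
    {lab : ∀ v : V, {w : V // H.Adj v w ∧ rk v < rk w} → Fin D} {k : Fin D}
    (hrk : ∀ v, rk v < N) {v w : V} (hu : upf H rk lab k v = some w) :
    hgt H rk lab k (N + 1) v = hgt H rk lab k (N + 1) w + 1 := by
  have h1 : hgt H rk lab k (N + 1) v = hgt H rk lab k N w + 1 := by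
    conv_lhs => rw [hgt]
    rw [hu]
  rw [h1, hgt_stab hrk N w (by have := hrk w; omega)]

end Heights

section Assembly

lemma sigma_fst_snd_eq {ι : Type} {W : ι → Type} {i : ι} {x y z : W i}
    (h : (⟨i, (x, z)⟩ : Σ j, W j × W j) = ⟨i, (y, z)⟩) : x = y := by
  have := sigma_mk_injective h
  exact congrArg Prod.fst this

lemma main_construction {V : Type} [Fintype V] {H : SimpleGraph V}
    (𝒢 : GraphClass) (hher : 𝒢.Hereditary)
    (c : GraphCover H) (hin : c.InClass 𝒢)
    {s D N : ℕ} (hloc : c.IsLocal s)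
    (rk : V → ℕ) (hrkinj : Function.Injective rk) (hrkbd : ∀ v, rk v < N)
    (hup : ∀ v, Nat.card {w : V // H.Adj v w ∧ rk v < rk w} ≤ D)
    (hedge : ∃ u v, H.Adj u v) :
    ∃ c' : GraphCover H, c'.InClass 𝒢 ∧ c'.Injective ∧ c'.IsUnion (D * (2 * s)) := by
  classical
  haveI := c.finι
  haveI : ∀ i, Finite (c.W i) := c.finW
  obtain ⟨u₀, v₀, h₀⟩ := hedge
  obtain ⟨i₀, a₀, b₀, -, -, -⟩ := c.edge_surj h₀
  -- labels on up-neighbours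
  choose lab hlabinj using fun v : V => exists_inj_fin (hup v)
  -- labels on preimages
  have hloc' : ∀ v : V, Nat.card {p : Σ i : c.ι, c.W i // c.φ p.1 p.2 = v} ≤ s := hloc
  choose plab hplabinj using fun v : V => exists_inj_fin (hloc' v)
  -- chosen witnesses for edges
  have hwx : ∀ u v : V, ∃ p : Σ i : c.ι, c.W i × c.W i, H.Adj u v →
      (c.G p.1).Adj p.2.1 p.2.2 ∧ c.φ p.1 p.2.1 = u ∧ c.φ p.1 p.2.2 = v := by
    intro u v
    by_cases h : H.Adj u v
    · obtain ⟨i, a, b, hab, ha, hb⟩ := c.edge_surj h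
      exact ⟨⟨i, (a, b)⟩, fun _ => ⟨hab, ha, hb⟩⟩
    · exact ⟨⟨i₀, (a₀, b₀)⟩, fun h' => absurd h' h⟩
  choose wsig hwsig using hwx
  -- chosen centre preimages
  have hppx : ∀ (v : V) (m : Fin s), ∃ p : Σ i : c.ι, c.W i,
      (∃ q : {p : Σ i : c.ι, c.W i // c.φ p.1 p.2 = v}, plab v q = m) →
      ∃ hp : c.φ p.1 p.2 = v, plab v ⟨p, hp⟩ = m := by
    intro v m
    by_cases h : ∃ q : {p : Σ i : c.ι, c.W i // c.φ p.1 p.2 = v}, plab v q = m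
    · obtain ⟨⟨p, hp⟩, hq⟩ := h
      exact ⟨p, fun _ => ⟨hp, hq⟩⟩
    · exact ⟨⟨i₀, a₀⟩, fun h' => absurd h' h⟩
  choose pp hpp using hppx
  set ht : Fin D → V → ℕ := fun k => hgt H rk lab k (N + 1) with hht_def
  have hht : ∀ (k : Fin D) (v w : V), upf H rk lab k v = some w → ht k v = ht k w + 1 :=
    fun k v w h => hgt_up hrkbd h
  set pr : ℕ → Bool := fun t => decide (t % 2 = 1) with hpr_def
  have pr_ne : ∀ t, pr t ≠ pr (t + 1) := by
    intro t
    simp only [hpr_def, ne_eq, decide_eq_decide]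
    omega
  -- guest vertex sets
  set act : Fin D → Bool → V → Fin s → Prop := fun k par v m =>
    (∃ q : {p : Σ i : c.ι, c.W i // c.φ p.1 p.2 = v}, plab v q = m) ∧ pr (ht k v + 1) = par
    with hact_def
  set leaf : Fin D → Bool → V → ∀ j : c.ι, c.W j → c.W j → Prop := fun k par v j cc x =>
    ∃ h : H.Adj (c.φ j x) v ∧ rk (c.φ j x) < rk v,
      lab (c.φ j x) ⟨v, h⟩ = k ∧ pr (ht k (c.φ j x)) = par ∧
      wsig (c.φ j x) v = ⟨j, (x, cc)⟩ with hleaf_def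
  set SG : Fin D → Bool → V → Fin s → ∀ j : c.ι, c.W j → Set (c.W j) := fun k par v m j cc =>
    {x | act k par v m ∧ (x = cc ∨ ((c.G j).Adj cc x ∧ leaf k par v j cc x))} with hSG_def
  -- the key construction for an oriented edge
  have key : ∀ u v : V, H.Adj u v → rk u < rk v →
      ∃ (k : Fin D) (par : Bool) (m : Fin s),
        ∃ x y : ↥(SG k par v m (pp v m).1 (pp v m).2),
          ((c.G (pp v m).1).induce (SG k par v m (pp v m).1 (pp v m).2)).Adj x y ∧
          c.φ (pp v m).1 x.val = u ∧ c.φ (pp v m).1 y.val = v := by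
    intro u v huv hlt
    obtain ⟨hgadj, hga, hgb⟩ := hwsig u v huv
    set q : {p : Σ i : c.ι, c.W i // c.φ p.1 p.2 = v} :=
      ⟨⟨(wsig u v).1, (wsig u v).2.2⟩, hgb⟩ with hq_def
    set m := plab v q with hm_def
    have hpex : ∃ q' : {p : Σ i : c.ι, c.W i // c.φ p.1 p.2 = v}, plab v q' = m := ⟨q, rfl⟩
    obtain ⟨hp, hpm⟩ := hpp v m hpex
    have hppq : (⟨pp v m, hp⟩ : {p : Σ i : c.ι, c.W i // c.φ p.1 p.2 = v}) = q :=
      hplabinj v (by rw [hpm])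
    have hsig : pp v m = ⟨(wsig u v).1, (wsig u v).2.2⟩ := congrArg Subtype.val hppq
    set k := lab u ⟨v, ⟨huv, hlt⟩⟩ with hk_def
    set par := pr (ht k u) with hpar_def
    have hupf : upf H rk lab k u = some v := upf_eq hlabinj ⟨huv, hlt⟩ rfl
    have hhtu : ht k u = ht k v + 1 := hht k u v hupf
    have hact1 : act k par v m := ⟨hpex, by rw [hpar_def, hhtu]⟩
    refine ⟨k, par, m, ?_⟩
    have main : ∀ σ : Σ i : c.ι, c.W i, σ = ⟨(wsig u v).1, (wsig u v).2.2⟩ →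
        ∃ x y : ↥(SG k par v m σ.1 σ.2),
          ((c.G σ.1).induce (SG k par v m σ.1 σ.2)).Adj x y ∧
          c.φ σ.1 x.val = u ∧ c.φ σ.1 y.val = v := by
      rintro σ rfl
      have hleafa : leaf k par v (wsig u v).1 (wsig u v).2.2 (wsig u v).2.1 := by
        rw [hleaf_def]
        simp only
        rw [hga]
        refine ⟨⟨huv, hlt⟩, rfl, rfl, ?_⟩
        rfl
      have hxa : (wsig u v).2.1 ∈ SG k par v m (wsig u v).1 (wsig u v).2.2 :=
        ⟨hact1, Or.inr ⟨hgadj.symm, hleafa⟩⟩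
      have hxb : (wsig u v).2.2 ∈ SG k par v m (wsig u v).1 (wsig u v).2.2 :=
        ⟨hact1, Or.inl rfl⟩
      exact ⟨⟨(wsig u v).2.1, hxa⟩, ⟨(wsig u v).2.2, hxb⟩, hgadj, hga, hgb⟩
    obtain ⟨x, y, hxy, hx, hy⟩ := main (pp v m) hsig
    exact ⟨x, y, hxy, hx, hy⟩
  -- the new cover
  refine ⟨⟨Fin D × Bool × V × Fin s, inferInstance,
    fun idx => ↥(SG idx.1 idx.2.1 idx.2.2.1 idx.2.2.2
      (pp idx.2.2.1 idx.2.2.2).1 (pp idx.2.2.1 idx.2.2.2).2),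
    fun idx => inferInstance,
    fun idx => (c.G (pp idx.2.2.1 idx.2.2.2).1).induce _,
    fun idx => ⟨fun x => c.φ (pp idx.2.2.1 idx.2.2.2).1 x.val,
      fun {a b} hab => (c.φ _).map_adj hab⟩,
    ?_⟩, ?_, ?_, ?_⟩
  -- edge surjectivity
  · intro u v huv
    have hne : rk u ≠ rk v := fun h => (H.ne_of_adj huv) (hrkinj h)
    rcases Nat.lt_or_ge (rk u) (rk v) with hlt | hge
    · obtain ⟨k, par, m, x, y, hxy, hx, hy⟩ := key u v huv hlt
      exact ⟨(k, par, v, m), x, y, hxy, hx, hy⟩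
    · have hlt : rk v < rk u := lt_of_le_of_ne hge (Ne.symm hne)
      obtain ⟨k, par, m, x, y, hxy, hx, hy⟩ := key v u huv.symm hlt
      exact ⟨(k, par, u, m), y, x, hxy.symm, hy, hx⟩
  -- in class
  · intro idx
    exact hher _ (c.G (pp idx.2.2.1 idx.2.2.2).1) (hin _) _
  -- injective
  · intro idx x y hxy
    obtain ⟨k, par, v, m⟩ := idx
    have heq : c.φ (pp v m).1 x.val = c.φ (pp v m).1 y.val := hxy
    have hxp : x.val ∈ SG k par v m (pp v m).1 (pp v m).2 := x.prop
    have hyp : y.val ∈ SG k par v m (pp v m).1 (pp v m).2 := y.prop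
    obtain ⟨hactx, hx⟩ := hxp
    obtain ⟨hacty, hy⟩ := hyp
    obtain ⟨hp, -⟩ := hpp v m hactx.1
    rcases hx with hx | ⟨hadjx, hlx⟩ <;> rcases hy with hy | ⟨hadjy, hly⟩
    · exact Subtype.ext (hx.trans hy.symm)
    · exfalso
      obtain ⟨⟨hA, -⟩, -⟩ := hly
      have hyv : c.φ (pp v m).1 y.val = v := by rw [← heq, hx, hp]
      rw [hyv] at hA
      exact H.ne_of_adj hA rfl
    · exfalso
      obtain ⟨⟨hA, -⟩, -⟩ := hlx
      have hxv : c.φ (pp v m).1 x.val = v := by rw [heq, hy, hp]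
      rw [hxv] at hA
      exact H.ne_of_adj hA rfl
    · obtain ⟨hA, -, -, hwx⟩ := hlx
      obtain ⟨hB, -, -, hwy⟩ := hly
      rw [← heq] at hwy
      have := hwx.symm.trans hwy
      exact Subtype.ext (sigma_fst_snd_eq this)
  -- union bound
  · have labc : ∀ (u u' : V) (h : u = u') (w : V) (hw : H.Adj u w ∧ rk u < rk w)
        (hw' : H.Adj u' w ∧ rk u' < rk w), lab u ⟨w, hw⟩ = lab u' ⟨w, hw'⟩ := by
      rintro u u' rfl w hw hw'; rfl
    refine ⟨fun idx => ⟨idx.1.val * (2 * s) + (cond idx.2.1 s 0 + idx.2.2.2.val), ?_⟩, ?_⟩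
    · have h1 : idx.1.val + 1 ≤ D := idx.1.isLt
      have h2 : (idx.1.val + 1) * (2 * s) ≤ D * (2 * s) := Nat.mul_le_mul_right _ h1
      rw [Nat.succ_mul] at h2
      have h3 : cond idx.2.1 s 0 + idx.2.2.2.val < 2 * s := by
        have := idx.2.2.2.isLt
        cases idx.2.1 <;> simp only [Bool.cond_false, Bool.cond_true] <;> omega
      omega
    · rintro ⟨k₁, p₁, v₁, m₁⟩ ⟨k₂, p₂, v₂, m₂⟩ hne hfe
      have hval : k₁.val * (2 * s) + (cond p₁ s 0 + m₁.val)
          = k₂.val * (2 * s) + (cond p₂ s 0 + m₂.val) := congrArg Fin.val hfe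
      have hm1 := m₁.isLt
      have hm2 := m₂.isLt
      have hk : k₁.val = k₂.val := by
        rcases Nat.lt_trichotomy k₁.val k₂.val with hlt | heq' | hgt
        · exfalso
          have h2 : (k₁.val + 1) * (2 * s) ≤ k₂.val * (2 * s) := Nat.mul_le_mul_right _ hlt
          rw [Nat.succ_mul] at h2
          cases p₁ <;> cases p₂ <;>
            simp only [Bool.cond_false, Bool.cond_true] at hval <;> omega
        · exact heq'
        · exfalso
          have h2 : (k₂.val + 1) * (2 * s) ≤ k₁.val * (2 * s) := Nat.mul_le_mul_right _ hgt
          rw [Nat.succ_mul] at h2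
          cases p₁ <;> cases p₂ <;>
            simp only [Bool.cond_false, Bool.cond_true] at hval <;> omega
      rw [hk] at hval
      have hcancel := Nat.add_left_cancel hval
      have hpm : p₁ = p₂ ∧ m₁.val = m₂.val := by
        cases p₁ <;> cases p₂ <;>
          simp only [Bool.cond_false, Bool.cond_true] at hcancel
        · exact ⟨rfl, by omega⟩
        · exfalso; omega
        · exfalso; omega
        · exact ⟨rfl, by omega⟩
      have hkk : k₁ = k₂ := Fin.ext hk
      have hmm : m₁ = m₂ := Fin.ext hpm.2
      have hv : v₁ ≠ v₂ := by
        intro h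
        exact hne (by rw [hkk, hpm.1, h, hmm])
      obtain ⟨hpp', hmm'⟩ := hpm
      subst hkk; subst hpp'; subst hmm
      rw [Set.disjoint_left]
      rintro yv ⟨x₁, hx₁⟩ ⟨x₂, hx₂⟩
      have hm₁ : x₁.val ∈ SG k₁ p₁ v₁ m₁ (pp v₁ m₁).1 (pp v₁ m₁).2 := x₁.prop
      have hm₂ : x₂.val ∈ SG k₁ p₁ v₂ m₁ (pp v₂ m₁).1 (pp v₂ m₁).2 := x₂.prop
      have hy₁ : c.φ (pp v₁ m₁).1 x₁.val = yv := hx₁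
      have hy₂ : c.φ (pp v₂ m₁).1 x₂.val = yv := hx₂
      obtain ⟨hact₁, hc₁⟩ := hm₁
      obtain ⟨hact₂, hc₂⟩ := hm₂
      obtain ⟨hp₁, -⟩ := hpp v₁ m₁ hact₁.1
      obtain ⟨hp₂, -⟩ := hpp v₂ m₁ hact₂.1
      rcases hc₁ with hc₁ | ⟨-, hl₁⟩ <;> rcases hc₂ with hc₂ | ⟨-, hl₂⟩
      · have e1 : yv = v₁ := by rw [← hy₁, hc₁]; exact hp₁
        have e2 : yv = v₂ := by rw [← hy₂, hc₂]; exact hp₂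
        exact hv (e1.symm.trans e2)
      · obtain ⟨⟨hA, hB⟩, -, hprr, -⟩ := hl₂
        have e1 : yv = v₁ := by rw [← hy₁, hc₁]; exact hp₁
        rw [hy₂, e1] at hprr
        exact pr_ne _ (hprr.trans hact₁.2.symm)
      · obtain ⟨⟨hA, hB⟩, -, hprr, -⟩ := hl₁
        have e2 : yv = v₂ := by rw [← hy₂, hc₂]; exact hp₂
        rw [hy₁, e2] at hprr
        exact pr_ne _ (hprr.trans hact₂.2.symm)
      · obtain ⟨⟨hA₁, hB₁⟩, hlab₁, -, -⟩ := hl₁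
        obtain ⟨⟨hA₂, hB₂⟩, hlab₂, -, -⟩ := hl₂
        have pf₁ : H.Adj yv v₁ ∧ rk yv < rk v₁ := by rw [← hy₁]; exact ⟨hA₁, hB₁⟩
        have pf₂ : H.Adj yv v₂ ∧ rk yv < rk v₂ := by rw [← hy₂]; exact ⟨hA₂, hB₂⟩
        have e₁ : lab yv ⟨v₁, pf₁⟩ = k₁ :=
          (labc yv _ hy₁.symm v₁ pf₁ ⟨hA₁, hB₁⟩).trans hlab₁
        have e₂ : lab yv ⟨v₂, pf₂⟩ = k₁ :=
          (labc yv _ hy₂.symm v₂ pf₂ ⟨hA₂, hB₂⟩).trans hlab₂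
        have := hlabinj yv (e₁.trans e₂.symm)
        exact hv (congrArg Subtype.val this)

end Assembly

section Final

lemma one_le_d {𝒢 : GraphClass} (h2 : 𝒢.ContainsK2) {d : ℚ}
    (hd : ∀ (W : Type) (G : SimpleGraph W), 𝒢 W G → madLE G d) : 1 ≤ d := by
  have h := hd (Fin 2) ⊤ h2 Set.univ ⟨0, trivial⟩
  have hcard : Nat.card (Set.univ : Set (Fin 2)) = 2 := by
    rw [Nat.card_congr (Equiv.Set.univ (Fin 2))]; simp
  have hne : Nonempty (((⊤ : SimpleGraph (Fin 2)).induce Set.univ).edgeSet) := by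
    refine ⟨⟨s(⟨0, trivial⟩, ⟨1, trivial⟩), ?_⟩⟩
    rw [SimpleGraph.mem_edgeSet]
    simp [SimpleGraph.comap_adj, Subtype.ext_iff]
  have hedge : 1 ≤ Nat.card (((⊤ : SimpleGraph (Fin 2)).induce Set.univ).edgeSet) :=
    Nat.one_le_iff_ne_zero.2 (Nat.card_ne_zero.2 ⟨hne, inferInstance⟩)
  rw [hcard] at h
  have h2' : (1 : ℚ) ≤ (Nat.card (((⊤ : SimpleGraph (Fin 2)).induce Set.univ).edgeSet) : ℚ) := by
    exact_mod_cast hedge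
  push_cast at h
  linarith

lemma folded_set_nonempty {V : Type} [Fintype V] {𝒢 : GraphClass} (h2 : 𝒢.ContainsK2)
    (H : SimpleGraph V) :
    {s | ∃ c : GraphCover H, c.InClass 𝒢 ∧ c.IsLocal s}.Nonempty := by
  classical
  refine ⟨Nat.card (Σ _e : {e : V × V // H.Adj e.1 e.2}, Fin 2),
    ⟨⟨{e : V × V // H.Adj e.1 e.2}, inferInstance, fun _ => Fin 2, fun _ => inferInstance,
      fun _ => ⊤, fun e => ⟨fun x => if x = 0 then e.val.1 else e.val.2, ?_⟩, ?_⟩, ?_, ?_⟩⟩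
  · intro a b hab
    fin_cases a <;> fin_cases b <;> simp_all <;>
      first
        | exact e.prop
        | exact e.prop.symm
  · intro u v huv
    refine ⟨⟨(u, v), huv⟩, 0, 1, ?_, rfl, rfl⟩
    simp [SimpleGraph.top_adj]
  · intro e
    exact h2
  · intro v
    exact Nat.card_le_card_of_injective Subtype.val Subtype.val_injective

lemma union_zero_of_edgeless {V : Type} {𝒢 : GraphClass} {H : SimpleGraph V}
    (h : ∀ u v : V, ¬H.Adj u v) :
    ∃ c : GraphCover H, c.InClass 𝒢 ∧ c.Injective ∧ c.IsUnion 0 := by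
  refine ⟨⟨Empty, inferInstance, fun _ => Empty, fun _ => inferInstance, fun _ => ⊥,
    fun i => i.elim, fun u v huv => absurd huv (h u v)⟩,
    fun i => i.elim, fun i => i.elim, ⟨fun i => i.elim, fun i => i.elim⟩⟩

end Final

/-- for a hereditary guest class of maximum average degree at
most `d`, `c_u(𝒢,H) ≤ 2d · c_f(𝒢,H)²`. -/
theorem union_le_folded_sq_of_hereditary_sparse (𝒢 : GraphClass)
    (h2 : 𝒢.ContainsK2) (hher : 𝒢.Hereditary) (d : ℚ)
    (hd : ∀ (W : Type) (G : SimpleGraph W), 𝒢 W G → madLE G d)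
    {V : Type} [Fintype V] (H : SimpleGraph V) :
    (unionCN 𝒢 H : ℚ) ≤ 2 * d * (foldedCN 𝒢 H : ℚ) ^ 2 := by
  classical
  have hd1 : (1 : ℚ) ≤ d := one_le_d h2 hd
  have hd0 : (0 : ℚ) ≤ d := le_trans zero_le_one hd1
  by_cases hE : ∃ u v, H.Adj u v
  · set s := foldedCN 𝒢 H with hs_def
    have hmem := Nat.sInf_mem (folded_set_nonempty h2 H (𝒢 := 𝒢))
    obtain ⟨c, hin, hloc⟩ := hmem
    have hloc' : c.IsLocal s := hloc
    have hds0 : (0 : ℚ) ≤ d * s := mul_nonneg hd0 (by positivity)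
    set D := Nat.floor (d * (s : ℚ)) with hD_def
    have hdeg : ∀ S : Finset V, S.Nonempty →
        ∃ v ∈ S, Nat.card {w : V // w ∈ S ∧ H.Adj v w} ≤ D := by
      intro S hS
      obtain ⟨v, hvS, hv⟩ := exists_small_deg c hd0 (fun i => hd _ _ (hin i)) hloc' hS
      exact ⟨v, hvS, Nat.le_floor hv⟩
    obtain ⟨rk, hinj, hbd, hdegr⟩ := exists_rank D hdeg Finset.univ
    have hrkinj : Function.Injective rk := fun a b h => hinj (by simp) (by simp) h
    have hrkbd : ∀ v, rk v < Fintype.card V := by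
      intro v
      have := hbd v (Finset.mem_univ v)
      simpa using this
    have hup : ∀ v, Nat.card {w : V // H.Adj v w ∧ rk v < rk w} ≤ D := by
      intro v
      refine le_trans (le_of_eq (Nat.card_congr ?_)) (hdegr v (Finset.mem_univ v))
      exact { toFun := fun w => ⟨w.val, Finset.mem_univ _, w.prop⟩
              invFun := fun w => ⟨w.val, w.prop.2⟩
              left_inv := fun w => rfl
              right_inv := fun w => rfl }
    obtain ⟨c', hin', hinj', hun'⟩ :=
      main_construction 𝒢 hher c hin hloc' rk hrkinj hrkbd hup hE
    have hle : unionCN 𝒢 H ≤ D * (2 * s) := Nat.sInf_le ⟨c', hin', hinj', hun'⟩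
    have hDle : (D : ℚ) ≤ d * s := Nat.floor_le hds0
    calc (unionCN 𝒢 H : ℚ) ≤ ((D * (2 * s) : ℕ) : ℚ) := by exact_mod_cast hle
      _ = (D : ℚ) * (2 * s) := by push_cast; ring
      _ ≤ (d * s) * (2 * s) := mul_le_mul_of_nonneg_right hDle (by positivity)
      _ = 2 * d * (s : ℚ) ^ 2 := by ring
  · push_neg at hE
    have h0 : unionCN 𝒢 H = 0 :=
      Nat.le_zero.mp (Nat.sInf_le (union_zero_of_edgeless (𝒢 := 𝒢) hE))
    rw [h0]
    have hsq : (0 : ℚ) ≤ (foldedCN 𝒢 H : ℚ) ^ 2 := sq_nonneg _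
    push_cast
    nlinarith
end

section
/- If G is a hereditary guest class containing K_2, then for every graph H it holds that c_u(G,H) ≤ χ(H)²·(c_f(G,H))². -/
open SimpleGraph

section Aux

variable {V : Type} {H : SimpleGraph V}

/-- Selection condition for the layered cover construction. -/
def condAux (c : GraphCover H) {k s : ℕ} (γ : H.Coloring (Fin k))
    (lab : (Σ i, c.W i) → Fin s)
    (pq : Fin k × Fin k × Fin s × Fin s) (x : Σ i, c.W i) : Prop :=
  (γ (c.φ x.1 x.2) = pq.1 ∧ lab x = pq.2.2.1) ∨
  (γ (c.φ x.1 x.2) = pq.2.1 ∧ γ (c.φ x.1 x.2) ≠ pq.1 ∧ lab x = pq.2.2.2)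

theorem aux_exists_union_cover (𝒢 : GraphClass) (hher : 𝒢.Hereditary)
    (c : GraphCover H) (hclass : c.InClass 𝒢) (k s : ℕ) (γ : H.Coloring (Fin k))
    (lab : (Σ i, c.W i) → Fin s)
    (labinj : ∀ x y : Σ i, c.W i, c.φ x.1 x.2 = c.φ y.1 y.2 → lab x = lab y → x = y) :
    ∃ c' : GraphCover H, c'.InClass 𝒢 ∧ c'.Injective ∧ c'.IsUnion (k ^ 2 * s ^ 2) := by
  classical
  haveI := c.finι
  haveI := c.finW
  -- the selected vertex sets
  set T : (Fin k × Fin k × Fin s × Fin s) × c.ι → Set (Σ i, c.W i) :=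
    fun j => {x | x.1 = j.2 ∧ condAux c γ lab j.1 x} with hT
  -- key uniqueness: within one layer, at most one selected preimage per host vertex
  have hcond : ∀ (pq : Fin k × Fin k × Fin s × Fin s) (x y : Σ i, c.W i),
      condAux c γ lab pq x → condAux c γ lab pq y →
      c.φ x.1 x.2 = c.φ y.1 y.2 → x = y := by
    intro pq x y hx hy hfib
    apply labinj x y hfib
    rcases hx with ⟨h1, h2⟩ | ⟨h1, h1', h2⟩ <;>
      rcases hy with ⟨g1, g2⟩ | ⟨g1, g1', g2⟩
    · rw [h2, g2]
    · rw [hfib] at h1; exact absurd h1 g1'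
    · rw [← hfib] at g1; exact absurd g1 h1'
    · rw [h2, g2]
  refine ⟨{
    ι := (Fin k × Fin k × Fin s × Fin s) × c.ι
    finι := inferInstance
    W := fun j => {a : c.W j.2 // condAux c γ lab j.1 ⟨j.2, a⟩}
    finW := fun j => inferInstance
    G := fun j => (c.G j.2).induce {a | condAux c γ lab j.1 ⟨j.2, a⟩}
    φ := fun j => ⟨fun a => c.φ j.2 a.1, fun h => (c.φ j.2).map_adj h⟩
    edge_surj := ?_ }, ?_, ?_, ?_⟩
  · intro u v huv
    obtain ⟨i, a, b, hab, ha, hb⟩ := c.edge_surj huv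
    refine ⟨((γ u, γ v, lab ⟨i, a⟩, lab ⟨i, b⟩), i),
      ⟨a, Or.inl ⟨by rw [ha], rfl⟩⟩,
      ⟨b, Or.inr ⟨by rw [hb], by rw [hb]; exact (γ.valid huv).symm, rfl⟩⟩,
      hab, ha, hb⟩
  · intro j
    exact hher _ _ (hclass j.2) _
  · intro j a b hab
    have := hcond j.1 ⟨j.2, a.1⟩ ⟨j.2, b.1⟩ a.2 b.2 hab
    exact Subtype.ext (sigma_mk_injective this)
  · refine ⟨fun j => (((finProdFinEquiv.prodCongr finProdFinEquiv).trans
      finProdFinEquiv).trans (finCongr (by ring)))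
      ((j.1.1, j.1.2.1), (j.1.2.2.1, j.1.2.2.2)), ?_⟩
    intro j₁ j₂ hne hf
    have hEq : ((j₁.1.1, j₁.1.2.1), (j₁.1.2.2.1, j₁.1.2.2.2))
        = ((j₂.1.1, j₂.1.2.1), (j₂.1.2.2.1, j₂.1.2.2.2)) := by
      exact (((finProdFinEquiv.prodCongr finProdFinEquiv).trans
        finProdFinEquiv).trans (finCongr (by ring))).injective hf
    have h1 : j₁.1 = j₂.1 := by
      simp only [Prod.mk.injEq] at hEq
      exact Prod.ext hEq.1.1 (Prod.ext hEq.1.2 (Prod.ext hEq.2.1 hEq.2.2))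
    have h2 : j₁.2 ≠ j₂.2 := by
      intro h
      exact hne (Prod.ext h1 h)
    rw [Set.disjoint_left]
    rintro v ⟨a, ha⟩ ⟨b, hb⟩
    have := hcond j₁.1 ⟨j₁.2, a.1⟩ ⟨j₂.2, b.1⟩ a.2 (by rw [h1]; exact b.2)
      (by simpa using ha.trans hb.symm)
    exact h2 (congrArg Sigma.fst this)

end Aux

/-- for a hereditary guest class,
`c_u(𝒢,H) ≤ χ(H)² · c_f(𝒢,H)²`. -/
theorem union_le_chrom_sq_mul_folded_sq (𝒢 : GraphClass) (h2 : 𝒢.ContainsK2)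
    (hher : 𝒢.Hereditary) {V : Type} [Fintype V] (H : SimpleGraph V) :
    unionCN 𝒢 H ≤ H.chromaticNumber.toNat ^ 2 * (foldedCN 𝒢 H) ^ 2 := by
    classical
  set k := H.chromaticNumber.toNat with hk
  set s := foldedCN 𝒢 H with hs
  obtain ⟨γ⟩ := H.colorable_chromaticNumber_of_fintype
  -- the folded covering number is attained
  have hne : {t | ∃ c : GraphCover H, c.InClass 𝒢 ∧ c.IsLocal t}.Nonempty := by
    refine ⟨Nat.card (Σ _ : {p : V × V // H.Adj p.1 p.2}, Fin 2),
      { ι := {p : V × V // H.Adj p.1 p.2}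
        finι := inferInstance
        W := fun _ => Fin 2
        finW := fun _ => inferInstance
        G := fun _ => ⊤
        φ := fun p => ⟨fun a => if a = 0 then p.1.1 else p.1.2, ?_⟩
        edge_surj := ?_ }, fun _ => h2, fun v => ?_⟩
    · intro a b hab
      fin_cases a <;> fin_cases b <;> simp_all <;>
        first | exact p.2 | exact p.2.symm
    · intro u v huv
      exact ⟨⟨(u, v), huv⟩, 0, 1, by simp, rfl, rfl⟩
    · exact Nat.card_le_card_of_injective Subtype.val Subtype.val_injective
  obtain ⟨c, hclass, hlocal⟩ := Nat.sInf_mem hne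
  haveI := c.finι
  haveI := c.finW
  -- construct labels that are injective on each fiber
  have hemb : ∀ v : V, ∃ f : {p : Σ i, c.W i // c.φ p.1 p.2 = v} → Fin s,
      Function.Injective f := by
    intro v
    haveI : Fintype {p : Σ i, c.W i // c.φ p.1 p.2 = v} := Fintype.ofFinite _
    have h1 : Fintype.card {p : Σ i, c.W i // c.φ p.1 p.2 = v} ≤ s := by
      have := hlocal v
      rwa [GraphCover.mult, Nat.card_eq_fintype_card] at this
    obtain ⟨f⟩ : Nonempty ({p : Σ i, c.W i // c.φ p.1 p.2 = v} ↪ Fin s) :=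
      Function.Embedding.nonempty_iff_card_le.2 (by simpa using h1)
    exact ⟨f, f.injective⟩
  choose L hL using hemb
  set lab : (Σ i, c.W i) → Fin s := fun x => L (c.φ x.1 x.2) ⟨x, rfl⟩ with hlab
  have key : ∀ (v : V) (x : Σ i, c.W i) (h : c.φ x.1 x.2 = v),
      lab x = L v ⟨x, h⟩ := by
    intro v x h
    subst h
    rfl
  have labinj : ∀ x y : Σ i, c.W i, c.φ x.1 x.2 = c.φ y.1 y.2 →
      lab x = lab y → x = y := by
    intro x y hxy hl
    rw [key (c.φ y.1 y.2) x hxy, key (c.φ y.1 y.2) y rfl] at hl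
    have := hL (c.φ y.1 y.2) hl
    exact congrArg Subtype.val this
  obtain ⟨c', h1, h2', h3⟩ :=
    aux_exists_union_cover 𝒢 hher c hclass k s γ lab labinj
  exact Nat.sInf_le ⟨c', h1, h2', h3⟩
end

section
/- For the class B of all bipartite graphs and every graph H, the union B-covering number of H equals ⌈log₂ χ(H)⌉: the minimum number of bipartite subgraphs of H whose union is H is exactly ⌈log₂ χ(H)⌉. -/
open SimpleGraph

/-- biparticity, Harary–Hsu–Miller: the minimum number of
bipartite subgraphs of `H` whose union is `H` equals `⌈log₂ χ(H)⌉`. -/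
theorem biparticity_eq_clog_chromaticNumber {V : Type} [Fintype V]
    (H : SimpleGraph V) :
    sInf {t | ∃ B : Fin t → SimpleGraph V,
        (∀ i, B i ≤ H ∧ (B i).Colorable 2) ∧
        ∀ ⦃u v⦄, H.Adj u v → ∃ i, (B i).Adj u v} =
      Nat.clog 2 H.chromaticNumber.toNat := by
  set n := H.chromaticNumber.toNat with hn
  set t := Nat.clog 2 n with ht
  have hcol : H.Colorable n := H.colorable_chromaticNumber_of_fintype
  obtain ⟨c⟩ := hcol
  have hmem : t ∈ {t | ∃ B : Fin t → SimpleGraph V,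
        (∀ i, B i ≤ H ∧ (B i).Colorable 2) ∧
        ∀ ⦃u v⦄, H.Adj u v → ∃ i, (B i).Adj u v} := by
    refine ⟨fun i => ⟨fun u v => H.Adj u v ∧ (c u).val.testBit i ≠ (c v).val.testBit i,
      ⟨fun u v h => ⟨h.1.symm, h.2.symm⟩⟩, ⟨fun u h => h.2 rfl⟩⟩, fun i => ⟨fun u v h => h.1, ?_⟩, ?_⟩
    · exact ⟨SimpleGraph.Coloring.mk (fun u => if (c u).val.testBit i then 1 else 0)
        (fun {u v} h => by simp only [Ne, SimpleGraph.top_adj]; by_cases hb : (c u).val.testBit i <;>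
          by_cases hb' : (c v).val.testBit i <;> simp_all)⟩
    · intro u v h
      have hne : (c u).val ≠ (c v).val := fun he => c.valid h (Fin.ext he)
      obtain ⟨i, hi⟩ : ∃ i, (c u).val.testBit i ≠ (c v).val.testBit i := by
        by_contra hc
        push_neg at hc
        exact hne (Nat.eq_of_testBit_eq hc)
      have hlt : i < t := by
        by_contra hge
        push_neg at hge
        have h1 : (c u).val < 2 ^ i :=
          lt_of_lt_of_le ((c u).isLt.trans_le (Nat.le_pow_clog one_lt_two n))
            (Nat.pow_le_pow_right (by norm_num) hge)
        have h2 : (c v).val < 2 ^ i :=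
          lt_of_lt_of_le ((c v).isLt.trans_le (Nat.le_pow_clog one_lt_two n))
            (Nat.pow_le_pow_right (by norm_num) hge)
        rw [Nat.testBit_lt_two_pow h1, Nat.testBit_lt_two_pow h2] at hi
        exact hi rfl
      exact ⟨⟨i, hlt⟩, h, hi⟩
  refine le_antisymm (Nat.sInf_le hmem) (le_csInf ⟨t, hmem⟩ ?_)
  rintro s ⟨B, hB, hcov⟩
  have : H.Colorable (2 ^ s) := by
    have f : ∀ i, (B i).Coloring (Fin 2) := fun i => ((hB i).2).some
    have C : H.Coloring (Fin s → Fin 2) := SimpleGraph.Coloring.mk (fun u i => f i u)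
      (by
        intro u v h hne
        obtain ⟨i, hi⟩ := hcov h
        exact ((f i).valid hi) (congrFun hne i))
    simpa using C.colorable
  have hle : H.chromaticNumber ≤ (2 ^ s : ℕ) := this.chromaticNumber_le
  have : n ≤ 2 ^ s := by
    rw [hn]
    exact_mod_cast ENat.toNat_le_toNat hle (ENat.coe_ne_top _)
  exact (Nat.clog_le_iff_le_pow one_lt_two).mpr this
end

section
/- If G is a monotone guest class containing K_2, then for every graph H we have c_u(G,H) ≤ ⌈log₂ χ(H)⌉ · (c_f(G,H))². -/
open SimpleGraph

/-- for a monotone guest class,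
`c_u(𝒢,H) ≤ ⌈log₂ χ(H)⌉ · c_f(𝒢,H)²`. -/
theorem union_le_clog_chrom_mul_folded_sq (𝒢 : GraphClass) (h2 : 𝒢.ContainsK2)
    (hmon : 𝒢.MonotoneClass) {V : Type} [Fintype V] (H : SimpleGraph V) :
    unionCN 𝒢 H ≤ Nat.clog 2 H.chromaticNumber.toNat * (foldedCN 𝒢 H) ^ 2 := by
  classical
  obtain ⟨col⟩ : H.Colorable H.chromaticNumber.toNat :=
    H.colorable_chromaticNumber_of_fintype
  set n := H.chromaticNumber.toNat with hn
  set k := Nat.clog 2 n with hk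
  -- the folded covering number set is nonempty (K₂ covers)
  have hne : {t | ∃ c : GraphCover H, c.InClass 𝒢 ∧ c.IsLocal t}.Nonempty := by
    refine ⟨Nat.card (Σ _ : {p : V × V // H.Adj p.1 p.2}, Fin 2),
      { ι := {p : V × V // H.Adj p.1 p.2}
        finι := inferInstance
        W := fun _ => Fin 2
        finW := fun _ => inferInstance
        G := fun _ => ⊤
        φ := fun e => ⟨fun t => if t = 0 then e.1.1 else e.1.2, by
          intro a b hab
          have hab' : a ≠ b := hab.ne
          fin_cases a <;> fin_cases b <;> simp_all <;>
            first | exact e.2 | exact e.2.symm⟩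
        edge_surj := by
          intro u v huv
          exact ⟨⟨(u, v), huv⟩, 0, 1, by simp, rfl, rfl⟩ }, fun _ => h2, ?_⟩
    intro v
    exact Nat.card_le_card_of_injective Subtype.val Subtype.val_injective
  have hfolded : foldedCN 𝒢 H ∈ {t | ∃ c : GraphCover H, c.InClass 𝒢 ∧ c.IsLocal t} :=
    Nat.sInf_mem hne
  set s := foldedCN 𝒢 H with hsdef
  obtain ⟨c, hcl, hloc⟩ := hfolded
  haveI := c.finι
  haveI := c.finW
  -- a labelling of all guest vertices, injective on each fibre of the cover
  let F : ∀ v : V, {p : Σ i, c.W i // c.φ p.1 p.2 = v} ↪ Fin s := fun v =>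
    (Finite.equivFin _).toEmbedding.trans (Fin.castLEEmb (hloc v))
  let ℓ : (Σ i, c.W i) → Fin s := fun p => F (c.φ p.1 p.2) ⟨p, rfl⟩
  have hℓeq : ∀ (p : Σ i, c.W i) (v : V) (hp : c.φ p.1 p.2 = v), ℓ p = F v ⟨p, hp⟩ := by
    intro p v hp; subst hp; rfl
  have hℓ : ∀ p q : Σ i, c.W i, c.φ p.1 p.2 = c.φ q.1 q.2 → ℓ p = ℓ q → p = q := by
    intro p q h hl
    rw [hℓeq p (c.φ q.1 q.2) h, hℓeq q (c.φ q.1 q.2) rfl] at hl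
    exact congrArg Subtype.val ((F (c.φ q.1 q.2)).injective hl)
  -- the bit of the colour of a vertex
  let bt : Fin k → V → Bool := fun b v => Nat.testBit (col v).val b.val
  -- selected guest vertices for an index (bit, label-of-false-side, label-of-true-side, i)
  let ι' : Type := Fin k × Fin s × Fin s × c.ι
  let Sel : ∀ x : ι', Set (c.W x.2.2.2) := fun x =>
    {w | (bt x.1 (c.φ x.2.2.2 w) = false ∧ ℓ ⟨x.2.2.2, w⟩ = x.2.1) ∨
         (bt x.1 (c.φ x.2.2.2 w) = true ∧ ℓ ⟨x.2.2.2, w⟩ = x.2.2.1)}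
  let G' : ∀ x : ι', SimpleGraph (Sel x) := fun x =>
    { Adj := fun p q => (c.G x.2.2.2).Adj p.val q.val ∧
        bt x.1 (c.φ x.2.2.2 p.val) ≠ bt x.1 (c.φ x.2.2.2 q.val)
      symm := ⟨fun p q h => ⟨h.1.symm, h.2.symm⟩⟩
      loopless := ⟨fun p h => (c.G x.2.2.2).irrefl h.1⟩ }
  let enc : Fin k × Fin s × Fin s → Fin (k * s ^ 2) := fun t =>
    finCongr (by ring) (finProdFinEquiv (t.1, finProdFinEquiv (t.2.1, t.2.2)))
  have henc : Function.Injective enc := by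
    intro t1 t2 h
    have h1 := finProdFinEquiv.injective ((finCongr (by ring : k * (s * s) = k * s ^ 2)).injective h)
    injection h1 with h2 h3
    have h4 := finProdFinEquiv.injective h3
    exact Prod.ext h2 h4
  let cov : GraphCover H :=
    { ι := ι'
      finι := inferInstance
      W := fun x => Sel x
      finW := fun x => inferInstance
      G := G'
      φ := fun x => ⟨fun p => c.φ x.2.2.2 p.val, fun h => (c.φ x.2.2.2).map_adj h.1⟩
      edge_surj := by
        intro u v huv
        have hcol : (col u).val ≠ (col v).val := by
          intro h; exact col.valid huv (Fin.val_injective h)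
        obtain ⟨j, hj⟩ : ∃ j, Nat.testBit (col u).val j ≠ Nat.testBit (col v).val j := by
          by_contra hcon; push_neg at hcon
          exact hcol (Nat.eq_of_testBit_eq hcon)
        have hjk : j < k := by
          by_contra hcon; push_neg at hcon
          have hpow : n ≤ 2 ^ j :=
            le_trans (Nat.le_pow_clog one_lt_two n) (Nat.pow_le_pow_right (by norm_num) hcon)
          rw [Nat.testBit_eq_false_of_lt (lt_of_lt_of_le (col u).isLt hpow),
            Nat.testBit_eq_false_of_lt (lt_of_lt_of_le (col v).isLt hpow)] at hj
          exact hj rfl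
        obtain ⟨i, a, b, hab, ha, hb⟩ := c.edge_surj huv
        have hj' : bt ⟨j, hjk⟩ u ≠ bt ⟨j, hjk⟩ v := hj
        rcases Bool.eq_false_or_eq_true (bt ⟨j, hjk⟩ u) with hbu | hbu
        · have hbv : bt ⟨j, hjk⟩ v = false := by
            rw [hbu] at hj'; cases hv : bt ⟨j, hjk⟩ v
            · rfl
            · exact absurd hv (Ne.symm hj')
          refine ⟨(⟨j, hjk⟩, ℓ ⟨i, b⟩, ℓ ⟨i, a⟩, i),
            ⟨a, Or.inr ⟨by rw [ha]; exact hbu, rfl⟩⟩,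
            ⟨b, Or.inl ⟨by rw [hb]; exact hbv, rfl⟩⟩,
            ⟨hab, by rw [ha, hb]; exact hj'⟩, ha, hb⟩
        · have hbv : bt ⟨j, hjk⟩ v = true := by
            rw [hbu] at hj'; cases hv : bt ⟨j, hjk⟩ v
            · exact absurd hv (Ne.symm hj')
            · rfl
          refine ⟨(⟨j, hjk⟩, ℓ ⟨i, a⟩, ℓ ⟨i, b⟩, i),
            ⟨a, Or.inl ⟨by rw [ha]; exact hbu, rfl⟩⟩,
            ⟨b, Or.inr ⟨by rw [hb]; exact hbv, rfl⟩⟩,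
            ⟨hab, by rw [ha, hb]; exact hj'⟩, ha, hb⟩ }
  refine Nat.sInf_le ⟨cov, ?_, ?_, ?_⟩
  · -- InClass
    intro x
    exact hmon _ _ (hcl x.2.2.2) (Sel x) (G' x) (fun p q h => h.1)
  · -- Injective
    intro x p q h
    have h' : c.φ x.2.2.2 p.val = c.φ x.2.2.2 q.val := h
    have hl : ℓ ⟨x.2.2.2, p.val⟩ = ℓ ⟨x.2.2.2, q.val⟩ := by
      rcases p.2 with ⟨hb1, hl1⟩ | ⟨hb1, hl1⟩ <;> rcases q.2 with ⟨hb2, hl2⟩ | ⟨hb2, hl2⟩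
      · rw [hl1, hl2]
      · rw [h'] at hb1; rw [hb1] at hb2; exact absurd hb2 (by simp)
      · rw [h'] at hb1; rw [hb1] at hb2; exact absurd hb2 (by simp)
      · rw [hl1, hl2]
    have hsig := hℓ ⟨x.2.2.2, p.val⟩ ⟨x.2.2.2, q.val⟩ h' hl
    exact Subtype.ext (eq_of_heq (Sigma.mk.inj_iff.mp hsig).2)
  · -- IsUnion
    refine ⟨fun x => enc (x.1, x.2.1, x.2.2.1), ?_⟩
    intro x y hxy hfe
    have ht := henc hfe
    injection ht with hb ht2
    injection ht2 with ha1 ha2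
    have hij : x.2.2.2 ≠ y.2.2.2 := by
      intro hii
      exact hxy (Prod.ext hb (Prod.ext ha1 (Prod.ext ha2 hii)))
    rw [Set.disjoint_left]
    rintro v ⟨p, hp⟩ ⟨q, hq⟩
    have hp' : c.φ x.2.2.2 p.val = v := hp
    have hq' : c.φ y.2.2.2 q.val = v := hq
    have hφ : c.φ x.2.2.2 p.val = c.φ y.2.2.2 q.val := hp'.trans hq'.symm
    have hl : ℓ ⟨x.2.2.2, p.val⟩ = ℓ ⟨y.2.2.2, q.val⟩ := by
      rcases p.2 with ⟨hb1, hl1⟩ | ⟨hb1, hl1⟩ <;> rcases q.2 with ⟨hb2, hl2⟩ | ⟨hb2, hl2⟩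
      · rw [hl1, hl2, ha1]
      · rw [hp', hb] at hb1; rw [hq'] at hb2
        exact absurd (hb1.symm.trans hb2) (by simp)
      · rw [hp', hb] at hb1; rw [hq'] at hb2
        exact absurd (hb1.symm.trans hb2) (by simp)
      · rw [hl1, hl2, ha2]
    have hsig := hℓ ⟨x.2.2.2, p.val⟩ ⟨y.2.2.2, q.val⟩ hφ hl
    exact hij (congrArg Sigma.fst hsig)
end

section
/- For every directed graph D, the chromatic number of the shift graph of D is at least log₂ of the chromatic number of D: χ(shift(D)) ≥ log₂ χ(D). -/
open SimpleGraph

/-- Lovász: for every directed graph `D`,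
`χ(shift(D)) ≥ log₂ χ(D)`. -/
theorem shiftGraph_chromatic_lower_bound {V : Type} [Fintype V]
    (D : V → V → Prop) :
    Nat.clog 2 (SimpleGraph.fromRel D).chromaticNumber.toNat ≤
      (shiftGraph D).chromaticNumber.toNat := by

  classical
  set c := (shiftGraph D).chromaticNumber.toNat with hc
  -- a coloring of the shift graph with c colors
  haveI : Finite {p : V × V // D p.1 p.2} := Subtype.finite
  obtain ⟨φ⟩ := (shiftGraph D).colorable_chromaticNumber_of_fintype
  -- color each vertex by the set of colors on its outgoing edges
  let S : V → Finset (Fin c) := fun v =>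
    Finset.univ.filter (fun x => ∃ w, ∃ h : D v w, φ ⟨(v, w), h⟩ = x)
  have key : ∀ u v, D u v → u ≠ v → S u ≠ S v := by
    intro u v hD hne hSeq
    have hmem : φ ⟨(u, v), hD⟩ ∈ S u := Finset.mem_filter.mpr ⟨Finset.mem_univ _, v, hD, rfl⟩
    rw [hSeq] at hmem
    obtain ⟨-, w, hw, hphi⟩ := Finset.mem_filter.mp hmem
    have hadj : (shiftGraph D).Adj ⟨(v, w), hw⟩ ⟨(u, v), hD⟩ := by
      refine ⟨?_, Or.inr rfl⟩
      intro h
      apply hne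
      have := congrArg (fun e : {p : V × V // D p.1 p.2} => e.val.1) h
      exact this.symm
    exact φ.valid hadj hphi
  let C : (SimpleGraph.fromRel D).Coloring (Finset (Fin c)) :=
    SimpleGraph.Coloring.mk S (by
      rintro u v ⟨hne, h | h⟩
      · exact key u v h hne
      · exact fun he => key v u h hne.symm he.symm)
  have hle : (SimpleGraph.fromRel D).chromaticNumber ≤ Fintype.card (Finset (Fin c)) :=
    C.colorable.chromaticNumber_le
  have hcard : Fintype.card (Finset (Fin c)) = 2 ^ c := by
    simp [Fintype.card_finset]
  rw [hcard] at hle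
  have hnat : (SimpleGraph.fromRel D).chromaticNumber.toNat ≤ 2 ^ c := by
    have := ENat.toNat_le_toNat hle (ENat.coe_ne_top _)
    rwa [ENat.toNat_coe] at this
  exact (Nat.clog_le_iff_le_pow (b := 2) (by norm_num)).mpr hnat
end
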